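/- arXiv:1111.1999 — 3 statements merged into one kernel-verified Lean document; each statement's English description precedes it below -/
import Mathlib

section
/- For every m n : ℕ and every letter a₁ : Fin m there exist computable functions f₁ f₂ : (Fin m → List (Fin m)) × (Fin m → List (Fin n)) × List (Fin n) → Bool such that for every triple (φ, ψ, u) for which φ is prolongable over a₁ and the word W obtained by applying ψ to φ^∞(a₁) is an infinite word: f₁ (φ, ψ, u) = true if and only if u is a factor of W, and f₂ (φ, ψ, u) = true if and only if u occurs in W at infinitely many starting positions. -/
/-- Extension of a morphism `φ : A → List B` to finite words: `φ†(w) = (w.map φ).flatten`. -/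
def applyMorph {A B : Type*} (φ : A → List B) (w : List A) : List B :=
  (w.map φ).flatten

/-- The finite word `v` occurs in the infinite word `W` at starting position `i`. -/
def OccursAt {A : Type*} (v : List A) (W : ℕ → A) (i : ℕ) : Prop :=
  ∀ (j : ℕ) (hj : j < v.length), W (i + j) = v.get ⟨j, hj⟩

/-- The finite word `v` is a factor of the infinite word `W`. -/
def FactorOf {A : Type*} (v : List A) (W : ℕ → A) : Prop :=
  ∃ i, OccursAt v W i

/-- The finite word `v` is a prefix of the infinite word `W`. -/
def PrefixOf {A : Type*} (v : List A) (W : ℕ → A) : Prop :=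
  OccursAt v W 0

/-- `W` is uniformly recurrent. -/
def UniformlyRecurrent {A : Type*} (W : ℕ → A) : Prop :=
  ∀ u, FactorOf u W → ∃ N, ∀ v, FactorOf v W → v.length = N → u <:+: v

/-- `W` is eventually periodic. -/
def EventuallyPeriodic {A : Type*} (W : ℕ → A) : Prop :=
  ∃ k t : ℕ, 1 ≤ t ∧ ∀ i, k ≤ i → W (i + t) = W i

/-- The substitution `φ` is prolongable over the letter `a₁`. -/
def Prolongable {A : Type*} (φ : A → List A) (a₁ : A) : Prop :=
  ∃ v, φ a₁ = a₁ :: v ∧ ∀ k : ℕ, (applyMorph φ)^[k] v ≠ []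

/-- The morphism `φ` is nonerasing. -/
def Nonerasing {A B : Type*} (φ : A → List B) : Prop :=
  ∀ a, φ a ≠ []

/-- `X` is the fixed point `φ^∞(a₁)`: every `φ^n([a₁])` is a prefix of `X`. -/
def IsFixedPoint {A : Type*} (φ : A → List A) (a₁ : A) (X : ℕ → A) : Prop :=
  ∀ n : ℕ, PrefixOf ((applyMorph φ)^[n] [a₁]) X

/-- `W` is the infinite word `ψ(φ^∞(a₁))`: the words `ψ(φ^n([a₁]))` have unbounded
length and each of them is a prefix of `W`. -/
def IsMorphicWord {A B : Type*} (φ : A → List A) (ψ : A → List B) (a₁ : A)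
    (W : ℕ → B) : Prop :=
  (∀ N : ℕ, ∃ k : ℕ, N ≤ (applyMorph ψ ((applyMorph φ)^[k] [a₁])).length) ∧
  ∀ k : ℕ, PrefixOf (applyMorph ψ ((applyMorph φ)^[k] [a₁])) W

/-- The letter `a` is `φ`-growing: `n ↦ (φ^n [a]).length` is unbounded. -/
def GrowingLetter {A : Type*} (φ : A → List A) (a : A) : Prop :=
  ∀ N : ℕ, ∃ n : ℕ, N ≤ ((applyMorph φ)^[n] [a]).length

/-- The finite word `w` is `φ`-bounded: the sequence `n ↦ φ^n(w)` is eventually periodic. -/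
def PhiBounded {A : Type*} (φ : A → List A) (w : List A) : Prop :=
  ∃ n₀ p : ℕ, 1 ≤ p ∧ ∀ n, n₀ ≤ n → (applyMorph φ)^[n + p] w = (applyMorph φ)^[n] w

/-- Letter `a` has growth order `(d, θ)` with respect to `φ`. -/
def HasGrowthOrder {A : Type*} (φ : A → List A) (a : A) (d : ℕ) (θ : ℝ) : Prop :=
  1 ≤ θ ∧ ∃ c C : ℝ, 0 < c ∧ c ≤ C ∧ ∀ n : ℕ, 1 ≤ n →
    c * (n : ℝ) ^ d * θ ^ n ≤ (((applyMorph φ)^[n] [a]).length : ℝ) ∧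
    (((applyMorph φ)^[n] [a]).length : ℝ) ≤ C * (n : ℝ) ^ d * θ ^ n

/-- The substitution `φ` is primitive. -/
def PrimitiveSubst {A : Type*} (φ : A → List A) : Prop :=
  ∃ k : ℕ, 1 ≤ k ∧ ∀ a b : A, b ∈ (applyMorph φ)^[k] [a]

/-- `v` is a cyclic shift of `u`. -/
def IsCyclicShift {A : Type*} (v u : List A) : Prop :=
  ∃ x y : List A, u = x ++ y ∧ v = y ++ x

/-- `W` is purely periodic with (nonempty) period `u`. -/
def PurelyPeriodicWith {A : Type*} (W : ℕ → A) (u : List A) : Prop :=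
  ∃ hu : u ≠ [], ∀ i : ℕ, W i = u.get ⟨i % u.length, Nat.mod_lt i (List.length_pos_of_ne_nil hu)⟩

/-- `W` is recurrent: every factor occurs at arbitrarily large starting positions. -/
def RecurrentWord {A : Type*} (W : ℕ → A) : Prop :=
  ∀ u, FactorOf u W → ∀ N : ℕ, ∃ i, N ≤ i ∧ OccursAt u W i

/-- The letter `a` is recurrent: it occurs in some `φ^k [a]`, `k ≥ 1`. -/
def RecurrentLetter {A : Type*} (φ : A → List A) (a : A) : Prop :=
  ∃ k : ℕ, 1 ≤ k ∧ a ∈ (applyMorph φ)^[k] [a]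

namespace FPMW
open List

variable {A B C : Type*}

theorem am_nil (θ : A → List B) : applyMorph θ [] = [] := rfl

theorem am_cons (θ : A → List B) (a : A) (w : List A) :
    applyMorph θ (a :: w) = θ a ++ applyMorph θ w := by
  simp [applyMorph]

theorem am_append (θ : A → List B) (w₁ w₂ : List A) :
    applyMorph θ (w₁ ++ w₂) = applyMorph θ w₁ ++ applyMorph θ w₂ := by
  simp [applyMorph]

theorem am_singleton (θ : A → List B) (a : A) : applyMorph θ [a] = θ a := by
  simp [applyMorph]

theorem am_comp (θ : B → List C) (φ : A → List B) (w : List A) :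
    applyMorph θ (applyMorph φ w) = applyMorph (fun a => applyMorph θ (φ a)) w := by
  induction w with
  | nil => rfl
  | cons a w ih => rw [am_cons, am_append, am_cons, ih]

theorem am_map (θ : B → List C) (g : A → B) (w : List A) :
    applyMorph θ (w.map g) = applyMorph (fun a => θ (g a)) w := by
  simp [applyMorph, List.map_map]; rfl

theorem am_map_some (φ : A → List B) (w : List A) :
    applyMorph (fun a => (φ a).map some) w = (applyMorph φ w).map some := by
  induction w with
  | nil => rfl
  | cons a w ih => rw [am_cons, am_cons, ih, List.map_append]

theorem filter_am (S : B → Bool) (θ : A → List B) (w : List A) :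
    (applyMorph θ w).filter S = applyMorph (fun a => (θ a).filter S) w := by
  induction w with
  | nil => rfl
  | cons a w ih => rw [am_cons, am_cons, filter_append, ih]

theorem am_filter_eq (θ : A → List B) (w : List A) :
    applyMorph θ (w.filter fun a => !(θ a).isEmpty) = applyMorph θ w := by
  induction w with
  | nil => rfl
  | cons a w ih =>
    by_cases h : θ a = [] <;>
      simp [filter_cons, List.isEmpty_iff, h, am_cons, ih]

theorem am_prefix_mono (θ : A → List B) {w₁ w₂ : List A} (h : w₁ <+: w₂) :
    applyMorph θ w₁ <+: applyMorph θ w₂ := by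
  obtain ⟨t, rfl⟩ := h; rw [am_append]; exact prefix_append _ _

theorem am_suffix_mono (θ : A → List B) {w₁ w₂ : List A} (h : w₁ <:+ w₂) :
    applyMorph θ w₁ <:+ applyMorph θ w₂ := by
  obtain ⟨t, rfl⟩ := h; rw [am_append]; exact suffix_append _ _

theorem am_infix_mono (θ : A → List B) {w₁ w₂ : List A} (h : w₁ <:+: w₂) :
    applyMorph θ w₁ <:+: applyMorph θ w₂ := by
  obtain ⟨p, s, rfl⟩ := h; rw [am_append, am_append]; exact ⟨_, _, rfl⟩

theorem am_iter_nil (φ : A → List A) (k : ℕ) : (applyMorph φ)^[k] [] = [] := by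
  induction k with
  | zero => rfl
  | succ k ih => rw [Function.iterate_succ_apply', ih]; rfl

theorem am_iter_append (φ : A → List A) (k : ℕ) (w₁ w₂ : List A) :
    (applyMorph φ)^[k] (w₁ ++ w₂) = (applyMorph φ)^[k] w₁ ++ (applyMorph φ)^[k] w₂ := by
  induction k with
  | zero => rfl
  | succ k ih => rw [Function.iterate_succ_apply', ih, am_append,
      Function.iterate_succ_apply', Function.iterate_succ_apply']

theorem am_iter_suffix_mono (φ : A → List A) (k : ℕ) {w₁ w₂ : List A} (h : w₁ <:+ w₂) :
    (applyMorph φ)^[k] w₁ <:+ (applyMorph φ)^[k] w₂ := by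
  obtain ⟨t, rfl⟩ := h; rw [am_iter_append]; exact suffix_append _ _

theorem am_iterate_eq (φ : A → List A) (k : ℕ) (w : List A) :
    (applyMorph φ)^[k] w = applyMorph (fun a => (applyMorph φ)^[k] [a]) w := by
  induction w with
  | nil => rw [am_iter_nil]; rfl
  | cons a w ih =>
    have h2 : a :: w = [a] ++ w := rfl
    rw [h2, am_iter_append, am_append, ih, am_singleton]

/-- Spanning lemma, prefix version. -/
theorem span_prefix (θ : A → List B) :
    ∀ w : List A, (∀ a ∈ w, θ a ≠ []) → ∀ x : List B, x ≠ [] →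
      x <+: applyMorph θ w →
      ∃ z, z <+: w ∧ z.length ≤ x.length ∧ x <+: applyMorph θ z := by
  intro w
  induction w with
  | nil =>
    intro _ x hx h
    rw [am_nil, prefix_nil] at h
    exact absurd h hx
  | cons a w ih =>
    intro hne x hx h
    rw [am_cons] at h
    have hθa : θ a ≠ [] := hne a mem_cons_self
    have h1 : 1 ≤ (θ a).length := length_pos_iff.mpr hθa
    by_cases hlen : x.length ≤ (θ a).length
    · have : x <+: θ a :=
        prefix_of_prefix_length_le h ((prefix_append _ _)) hlen
      exact ⟨[a], ⟨w, rfl⟩, by simpa using Nat.succ_le_of_lt (length_pos_iff.mpr hx),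
        by rw [am_singleton]; exact this⟩
    · push_neg at hlen
      have hθx : θ a <+: x :=
        prefix_of_prefix_length_le (prefix_append _ _) h hlen.le
      obtain ⟨x', rfl⟩ := hθx
      have hx' : x' <+: applyMorph θ w := ((prefix_append_right_inj (θ a)).mp h)
      rcases eq_or_ne x' [] with rfl | hx'ne
      · exact ⟨[a], ⟨w, rfl⟩, by simpa using h1,
          by rw [am_singleton]; simpa using prefix_rfl⟩
      · obtain ⟨z', hz'w, hz'len, hz'x⟩ := ih (fun b hb => hne b (mem_cons_of_mem a hb)) x' hx'ne hx'
        refine ⟨a :: z', cons_prefix_cons.mpr ⟨rfl, hz'w⟩, ?_, ?_⟩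
        · simp only [length_cons, length_append]
          omega
        · rw [am_cons]
          exact (prefix_append_right_inj (θ a)).mpr hz'x

theorem suffix_prefix_infix {y Y : List B} {x' Z : List B} (h1 : y <:+ Y) (h2 : x' <+: Z) :
    y ++ x' <:+: Y ++ Z := by
  obtain ⟨c, rfl⟩ := h1; obtain ⟨d, rfl⟩ := h2
  exact ⟨c, d, by simp⟩

/-- Spanning lemma, infix version. -/
theorem span_infix (θ : A → List B) :
    ∀ w : List A, (∀ a ∈ w, θ a ≠ []) → ∀ x : List B, x ≠ [] →
      x <:+: applyMorph θ w →
      ∃ z, z <:+: w ∧ z.length ≤ x.length ∧ x <:+: applyMorph θ z := by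
  intro w
  induction w with
  | nil =>
    intro _ x hx h
    rw [am_nil] at h
    exact absurd (eq_nil_of_infix_nil h) hx
  | cons a w ih =>
    intro hne x hx h
    rw [am_cons] at h
    obtain ⟨p, s, hps⟩ := h
    have hθa : θ a ≠ [] := hne a mem_cons_self
    have h1 : 1 ≤ (θ a).length := length_pos_iff.mpr hθa
    by_cases hp : (θ a).length ≤ p.length
    · -- x is an infix of applyMorph θ w
      have hθp : θ a <+: p :=
        prefix_of_prefix_length_le (prefix_append _ _)
          ⟨x ++ s, by rw [← hps]; simp⟩ hp
      obtain ⟨p₂, rfl⟩ := hθp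
      have hMw : applyMorph θ w = p₂ ++ (x ++ s) := by
        have h3 := hps
        simp only [append_assoc] at h3
        exact (append_cancel_left h3).symm
      obtain ⟨z, hzw, hzl, hzx⟩ := ih (fun b hb => hne b (mem_cons_of_mem a hb)) x hx
        ⟨p₂, s, by rw [hMw, append_assoc]⟩
      exact ⟨z, hzw.trans (infix_cons infix_rfl), hzl, hzx⟩
    · push_neg at hp
      -- x starts inside θ a
      set y := (θ a).drop p.length with hy
      have hyne : y ≠ [] := by
        simp only [hy, ne_eq, drop_eq_nil_iff]
        omega
      have hysuf : y <:+ θ a := drop_suffix _ _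
      have hxpre : x <+: y ++ applyMorph θ w := by
        have hd : (p ++ x ++ s).drop p.length = x ++ s := by
          rw [append_assoc]; exact drop_left
        have h4 : (θ a ++ applyMorph θ w).drop p.length = x ++ s := by rw [← hps, hd]
        rw [List.drop_append_of_le_length hp.le] at h4
        exact ⟨s, h4.symm⟩
      have hempty : x <:+: applyMorph θ [a] → ∃ z, z <:+: a :: w ∧ z.length ≤ x.length ∧ x <:+: applyMorph θ z := by
        intro hxa
        exact ⟨[a], List.IsPrefix.isInfix ⟨w, rfl⟩, by simpa using Nat.succ_le_of_lt (length_pos_iff.mpr hx), hxa⟩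
      by_cases hxy : x.length ≤ y.length
      · have hxy' : x <+: y := prefix_of_prefix_length_le hxpre (prefix_append _ _) hxy
        exact hempty (by rw [am_singleton]; exact hxy'.isInfix.trans hysuf.isInfix)
      · push_neg at hxy
        have hyx : y <+: x := prefix_of_prefix_length_le (prefix_append _ _) hxpre hxy.le
        obtain ⟨x', rfl⟩ := hyx
        have hx' : x' <+: applyMorph θ w := (prefix_append_right_inj y).mp hxpre
        rcases eq_or_ne x' [] with rfl | hx'ne
        · exact hempty (by rw [am_singleton]; simpa using hysuf.isInfix)
        · obtain ⟨z', hz'w, hz'len, hz'x⟩ :=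
            span_prefix θ w (fun b hb => hne b (mem_cons_of_mem a hb)) x' hx'ne hx'
          refine ⟨a :: z', ?_, ?_, ?_⟩
          · exact (cons_prefix_cons.mpr ⟨rfl, hz'w⟩).isInfix
          · have hy1 : 1 ≤ y.length := length_pos_iff.mpr hyne
            simp only [length_cons, length_append]
            omega
          · rw [am_cons]
            exact suffix_prefix_infix hysuf hz'x

/-- The key factorization lemma for factor sets of morphic images. -/
theorem factorset_eq (θ : A → List B) (w : List A) {R : ℕ} {x : List B} (hx : x.length ≤ R) :
    x <:+: applyMorph θ w ↔
      ∃ z, z.length ≤ R ∧ (z <:+: w.filter fun a => !(θ a).isEmpty) ∧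
        x <:+: applyMorph θ z := by
  constructor
  · intro h
    rcases eq_or_ne x [] with rfl | hne
    · exact ⟨[], by simp, nil_infix, nil_infix⟩
    · rw [← am_filter_eq θ w] at h
      obtain ⟨z, hz, hlen, hx'⟩ := span_infix θ _
        (fun a ha => by
          have := of_mem_filter ha
          simpa [List.isEmpty_iff] using this) x hne h
      exact ⟨z, hlen.trans hx, hz, hx'⟩
  · rintro ⟨z, _, hz, hxz⟩
    refine hxz.trans ?_
    have h5 := am_infix_mono θ hz
    rwa [am_filter_eq θ w] at h5

end FPMW
namespace FPMW
open List

/-- Generic stabilization for deterministic monotone chains of subsets of a finite set. -/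
theorem stab_mono {Γ : Type*} {G : Set Γ} (hG : G.Finite) (F : Set Γ → Set Γ)
    (c : ℕ → Set Γ) (hc : ∀ k, c (k + 1) = F (c k)) (hsub : ∀ k, c k ⊆ G)
    (hmono : ∀ k, c k ⊆ c (k + 1)) {K : ℕ} (hK : G.ncard ≤ K) :
    (∀ k, c k ⊆ c K) ∧ ∀ k, K ≤ k → c k = c K := by
  have hmono' : ∀ i j, i ≤ j → c i ⊆ c j := by
    intro i j hij
    induction j, hij using Nat.le_induction with
    | base => exact subset_rfl
    | succ j hij ih => exact ih.trans (hmono j)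
  have hfix : ∃ n ≤ G.ncard, c n = c (n + 1) := by
    by_contra hcon
    push_neg at hcon
    have key : ∀ n, n ≤ G.ncard + 1 → n ≤ (c n).ncard := by
      intro n hn
      induction n with
      | zero => exact Nat.zero_le _
      | succ n ih =>
        have h1 : n ≤ (c n).ncard := ih (by omega)
        have h2 : (c n).ncard < (c (n + 1)).ncard :=
          Set.ncard_lt_ncard (ssubset_of_subset_of_ne (hmono n) (hcon n (by omega)))
            (hG.subset (hsub (n + 1)))
        omega
    have h3 := key (G.ncard + 1) le_rfl
    have hle := Set.ncard_le_ncard (hsub (G.ncard + 1)) hG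
    omega
  obtain ⟨n, hn, heq⟩ := hfix
  have hconst : ∀ j, n ≤ j → c j = c n := by
    intro j hj
    induction j, hj using Nat.le_induction with
    | base => rfl
    | succ j hj ih => rw [hc j, ih, ← hc n, ← heq]
  have hKn : c K = c n := hconst K (hn.trans hK)
  constructor
  · intro k
    rcases le_or_gt k K with h | h
    · exact hmono' k K h
    · rw [hconst k (by omega), hKn]
  · intro k hk
    rw [hconst k (by omega), hKn]

/-- Generic stabilization, decreasing version. -/
theorem stab_anti {Γ : Type*} {G : Set Γ} (hG : G.Finite) (F : Set Γ → Set Γ)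
    (c : ℕ → Set Γ) (hc : ∀ k, c (k + 1) = F (c k)) (hsub : ∀ k, c k ⊆ G)
    (hanti : ∀ k, c (k + 1) ⊆ c k) {K : ℕ} (hK : G.ncard ≤ K) :
    (∀ k, c K ⊆ c k) ∧ ∀ k, K ≤ k → c k = c K := by
  set c' : ℕ → Set Γ := fun k => G \ c k with hc'
  set F' : Set Γ → Set Γ := fun T => G \ F (G \ T) with hF'
  have h1 : ∀ k, c' (k + 1) = F' (c' k) := by
    intro k
    simp only [hc', hF']
    rw [Set.diff_diff_cancel_left (hsub k), hc k]
  have h2 : ∀ k, c' k ⊆ G := fun k => Set.diff_subset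
  have h3 : ∀ k, c' k ⊆ c' (k + 1) := fun k => Set.diff_subset_diff_right (hanti k)
  obtain ⟨ha, hb⟩ := stab_mono hG F' c' h1 h2 h3 hK
  have hcancel : ∀ k, G \ c' k = c k := by
    intro k
    simp only [hc']
    exact Set.diff_diff_cancel_left (hsub k)
  constructor
  · intro k
    rw [← hcancel k, ← hcancel K]
    exact Set.diff_subset_diff_right (ha k)
  · intro k hk
    rw [← hcancel k, ← hcancel K, hb k hk]

/-- Capacity bound for the state machine over alphabet `A` with factor length `L`. -/
def capA (A : Type*) [Fintype A] (L : ℕ) : ℕ :=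
  2 ^ Fintype.card A * (Fintype.card A + 1) ^ (L + 1)

theorem states_finite (A : Type*) [Fintype A] [DecidableEq A] (L : ℕ) :
    ({p : (A → Bool) × List A | p.2.length ≤ L}).Finite ∧
    ({p : (A → Bool) × List A | p.2.length ≤ L}).ncard ≤ capA A L := by
  set f : (A → Bool) × List A → (A → Bool) × (Fin (L + 1) → Option A) :=
    fun p => (p.1, fun i => p.2[i.val]?) with hf
  have hinj : Set.InjOn f {p : (A → Bool) × List A | p.2.length ≤ L} := by
    rintro ⟨S₁, l₁⟩ h₁ ⟨S₂, l₂⟩ h₂ heq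
    simp only [Set.mem_setOf_eq] at h₁ h₂
    simp only [hf, Prod.mk.injEq] at heq
    obtain ⟨hS, h⟩ := heq
    refine Prod.ext hS ?_
    dsimp only
    apply List.ext_getElem?
    intro i
    rcases lt_or_ge i (L + 1) with hi | hi
    · exact congrFun h ⟨i, hi⟩
    · rw [getElem?_eq_none (by omega), getElem?_eq_none (by omega)]
  have hfin : ({p : (A → Bool) × List A | p.2.length ≤ L}).Finite :=
    Set.Finite.of_finite_image (Set.toFinite _) hinj
  refine ⟨hfin, ?_⟩
  have hcard : (Set.univ : Set ((A → Bool) × (Fin (L + 1) → Option A))).ncard = capA A L := by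
    rw [Set.ncard_univ, Nat.card_eq_fintype_card, Fintype.card_prod, Fintype.card_fun,
      Fintype.card_fun]
    simp [capA]
  calc ({p : (A → Bool) × List A | p.2.length ≤ L}).ncard
      ≤ (Set.univ : Set ((A → Bool) × (Fin (L + 1) → Option A))).ncard :=
        Set.ncard_le_ncard_of_injOn f (fun a _ => Set.mem_univ _) hinj (Set.toFinite _)
    _ = capA A L := hcard

section Machine

variable {A : Type*} [Fintype A] [DecidableEq A] {ι : Type*}

theorem machine_chain (φ : A → List A) (L : ℕ) (V : ℕ → ι → List A)
    (hV : ∀ k j, V (k + 1) j = applyMorph φ (V k j)) (k : ℕ) :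
    (fun p : (A → Bool) × List A =>
        p.2.length ≤ L ∧ ∃ j, p.2 <:+: (V (k + 1) j).filter p.1) =
      (fun p : (A → Bool) × List A =>
        p.2.length ≤ L ∧ ∃ z, (z.length ≤ L ∧
          ∃ j, z <:+: (V k j).filter fun a => !((φ a).filter p.1).isEmpty) ∧
          p.2 <:+: (applyMorph φ z).filter p.1) := by
  funext ⟨S, x⟩
  simp only [eq_iff_iff]
  constructor
  · rintro ⟨hxL, j, hx⟩
    refine ⟨hxL, ?_⟩
    rw [hV, filter_am] at hx
    obtain ⟨z, hzL, hzf, hxz⟩ := (factorset_eq _ _ hxL).mp hx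
    refine ⟨z, ⟨hzL, j, hzf⟩, ?_⟩
    rwa [filter_am]
  · rintro ⟨hxL, z, ⟨hzL, j, hzf⟩, hxz⟩
    refine ⟨hxL, j, ?_⟩
    rw [hV, filter_am]
    rw [filter_am] at hxz
    exact (factorset_eq _ _ hxL).mpr ⟨z, hzL, hzf, hxz⟩

theorem machine_mono (φ : A → List A) (L : ℕ) (V : ℕ → ι → List A)
    (hV : ∀ k j, V (k + 1) j = applyMorph φ (V k j))
    (hmono : ∀ k S x, (∃ j, x <:+: (V k j).filter S) → ∃ j, x <:+: (V (k + 1) j).filter S)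
    {K : ℕ} (hK : capA A L ≤ K) :
    ∀ k S x, x.length ≤ L → (∃ j, x <:+: (V k j).filter S) →
      ∃ j, x <:+: (V K j).filter S := by
  set c : ℕ → Set ((A → Bool) × List A) :=
    fun k => {p | p.2.length ≤ L ∧ ∃ j, p.2 <:+: (V k j).filter p.1} with hcdef
  set F : Set ((A → Bool) × List A) → Set ((A → Bool) × List A) :=
    fun T => {p | p.2.length ≤ L ∧
      ∃ z, ((fun a => !((φ a).filter p.1).isEmpty), z) ∈ T ∧
        p.2 <:+: (applyMorph φ z).filter p.1} with hFdef
  have hc : ∀ k, c (k + 1) = F (c k) := by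
    intro k
    exact Set.ext fun p => iff_of_eq (congrFun (machine_chain φ L V hV k) p)
  have hsub : ∀ k, c k ⊆ {p : (A → Bool) × List A | p.2.length ≤ L} :=
    fun k p hp => hp.1
  have hmono' : ∀ k, c k ⊆ c (k + 1) := by
    rintro k ⟨S, x⟩ ⟨hxL, hj⟩
    exact ⟨hxL, hmono k S x hj⟩
  obtain ⟨hfin, hcap⟩ := states_finite A L
  obtain ⟨hall, _⟩ := stab_mono hfin F c hc hsub hmono' (hcap.trans hK)
  intro k S x hxL hex
  exact (hall k (show (S, x) ∈ c k from ⟨hxL, hex⟩)).2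

theorem machine_anti (φ : A → List A) (L : ℕ) (V : ℕ → ι → List A)
    (hV : ∀ k j, V (k + 1) j = applyMorph φ (V k j))
    (hanti : ∀ k S x, (∃ j, x <:+: (V (k + 1) j).filter S) → ∃ j, x <:+: (V k j).filter S)
    {K : ℕ} (hK : capA A L ≤ K) :
    ∀ k S x, x.length ≤ L → (∃ j, x <:+: (V K j).filter S) →
      ∃ j, x <:+: (V k j).filter S := by
  set c : ℕ → Set ((A → Bool) × List A) :=
    fun k => {p | p.2.length ≤ L ∧ ∃ j, p.2 <:+: (V k j).filter p.1} with hcdef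
  set F : Set ((A → Bool) × List A) → Set ((A → Bool) × List A) :=
    fun T => {p | p.2.length ≤ L ∧
      ∃ z, ((fun a => !((φ a).filter p.1).isEmpty), z) ∈ T ∧
        p.2 <:+: (applyMorph φ z).filter p.1} with hFdef
  have hc : ∀ k, c (k + 1) = F (c k) := by
    intro k
    exact Set.ext fun p => iff_of_eq (congrFun (machine_chain φ L V hV k) p)
  have hsub : ∀ k, c k ⊆ {p : (A → Bool) × List A | p.2.length ≤ L} :=
    fun k p hp => hp.1
  have hanti' : ∀ k, c (k + 1) ⊆ c k := by
    rintro k ⟨S, x⟩ ⟨hxL, hj⟩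
    exact ⟨hxL, hanti k S x hj⟩
  obtain ⟨hfin, hcap⟩ := states_finite A L
  obtain ⟨hall, _⟩ := stab_anti hfin F c hc hsub hanti' (hcap.trans hK)
  intro k S x hxL hex
  exact (hall k (show (S, x) ∈ c K from ⟨hxL, hex⟩)).2

theorem machine_psi_mono {B : Type*} (φ : A → List A) (ψ : A → List B)
    (V : ℕ → ι → List A)
    (hV : ∀ k j, V (k + 1) j = applyMorph φ (V k j))
    (hmono : ∀ k S x, (∃ j, x <:+: (V k j).filter S) → ∃ j, x <:+: (V (k + 1) j).filter S)
    (u : List B) {K : ℕ} (hK : capA A u.length ≤ K) (k : ℕ)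
    (h : ∃ j, u <:+: applyMorph ψ (V k j)) : ∃ j, u <:+: applyMorph ψ (V K j) := by
  obtain ⟨j, hj⟩ := h
  obtain ⟨z, hzL, hzf, huz⟩ := (factorset_eq ψ _ le_rfl).mp hj
  obtain ⟨j', hj'⟩ := machine_mono φ u.length V hV hmono hK k _ z hzL ⟨j, hzf⟩
  exact ⟨j', (factorset_eq ψ _ le_rfl).mpr ⟨z, hzL, hj', huz⟩⟩

theorem machine_psi_anti {B : Type*} (φ : A → List A) (ψ : A → List B)
    (V : ℕ → ι → List A)
    (hV : ∀ k j, V (k + 1) j = applyMorph φ (V k j))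
    (hanti : ∀ k S x, (∃ j, x <:+: (V (k + 1) j).filter S) → ∃ j, x <:+: (V k j).filter S)
    (u : List B) {K : ℕ} (hK : capA A u.length ≤ K) (k : ℕ)
    (h : ∃ j, u <:+: applyMorph ψ (V K j)) : ∃ j, u <:+: applyMorph ψ (V k j) := by
  obtain ⟨j, hj⟩ := h
  obtain ⟨z, hzL, hzf, huz⟩ := (factorset_eq ψ _ le_rfl).mp hj
  obtain ⟨j', hj'⟩ := machine_anti φ u.length V hV hanti hK k _ z hzL ⟨j, hzf⟩
  exact ⟨j', (factorset_eq ψ _ le_rfl).mpr ⟨z, hzL, hj', huz⟩⟩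

end Machine

end FPMW
namespace FPMW
open List

section Words

variable {A B : Type*} (φ : A → List A) (ψ : A → List B) (a₁ : A) (v : List A)

theorem P_succ (k : ℕ) :
    (applyMorph φ)^[k + 1] [a₁] = applyMorph φ ((applyMorph φ)^[k] [a₁]) :=
  Function.iterate_succ_apply' _ _ _

variable (hφ : φ a₁ = a₁ :: v)
include hφ

theorem P_step (k : ℕ) :
    (applyMorph φ)^[k + 1] [a₁] = (applyMorph φ)^[k] [a₁] ++ (applyMorph φ)^[k] v := by
  induction k with
  | zero => simp [am_singleton, hφ]
  | succ k ih =>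
    calc (applyMorph φ)^[k + 1 + 1] [a₁]
        = applyMorph φ ((applyMorph φ)^[k + 1] [a₁]) := P_succ φ a₁ (k + 1)
      _ = applyMorph φ ((applyMorph φ)^[k] [a₁]) ++ applyMorph φ ((applyMorph φ)^[k] v) := by
          rw [ih, am_append]
      _ = (applyMorph φ)^[k + 1] [a₁] ++ (applyMorph φ)^[k + 1] v := by
          rw [← P_succ φ a₁ k, ← Function.iterate_succ_apply' (applyMorph φ) k v]

theorem P_prefix (k : ℕ) :
    (applyMorph φ)^[k] [a₁] <+: (applyMorph φ)^[k + 1] [a₁] :=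
  ⟨_, (P_step φ a₁ v hφ k).symm⟩

theorem P_prefix_le {k l : ℕ} (h : k ≤ l) :
    (applyMorph φ)^[k] [a₁] <+: (applyMorph φ)^[l] [a₁] := by
  induction l, h using Nat.le_induction with
  | base => exact prefix_rfl
  | succ l hl ih => exact ih.trans (P_prefix φ a₁ v hφ l)

theorem P_head (k : ℕ) :
    (applyMorph φ)^[k] [a₁] = a₁ :: ((applyMorph φ)^[k] [a₁]).tail := by
  obtain ⟨t, ht⟩ := P_prefix_le φ a₁ v hφ (Nat.zero_le k)
  simp only [Function.iterate_zero_apply, singleton_append] at ht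
  rw [← ht]
  rfl

theorem tail_step (j : ℕ) :
    ((applyMorph φ)^[j + 1] [a₁]).tail =
      v ++ applyMorph φ (((applyMorph φ)^[j] [a₁]).tail) := by
  have h1 : (applyMorph φ)^[j + 1] [a₁] =
      applyMorph φ (a₁ :: ((applyMorph φ)^[j] [a₁]).tail) := by
    rw [P_succ, ← P_head φ a₁ v hφ]
  rw [am_cons, hφ] at h1
  rw [h1]
  rfl

theorem tail_prefix (j : ℕ) :
    ((applyMorph φ)^[j] [a₁]).tail <+: ((applyMorph φ)^[j + 1] [a₁]).tail := by
  have h1 := P_step φ a₁ v hφ j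
  rw [P_head φ a₁ v hφ j] at h1
  rw [h1]
  exact ⟨(applyMorph φ)^[j] v, rfl⟩

theorem P_decomp (k j : ℕ) :
    (applyMorph φ)^[k + (j + 1)] [a₁] =
      (applyMorph φ)^[k] [a₁] ++ (applyMorph φ)^[k] (((applyMorph φ)^[j + 1] [a₁]).tail) := by
  rw [Function.iterate_add_apply]
  conv_lhs => rw [P_head φ a₁ v hφ (j + 1)]
  rw [show (a₁ :: ((applyMorph φ)^[j + 1] [a₁]).tail) =
    [a₁] ++ ((applyMorph φ)^[j + 1] [a₁]).tail from rfl]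
  rw [am_iter_append]

end Words

section Occ

variable {B : Type*}

theorem occ_of_prefix_decomp {W : ℕ → B} {w p u s : List B} (hw : PrefixOf w W)
    (hdecomp : w = p ++ (u ++ s)) : OccursAt u W p.length := by
  intro j hj
  have hlen : p.length + j < w.length := by
    rw [hdecomp]; simp only [length_append]; omega
  have h1 := hw (p.length + j) hlen
  rw [zero_add] at h1
  rw [h1]
  simp only [get_eq_getElem, hdecomp]
  rw [List.getElem_append_right (by omega : p.length ≤ p.length + j)]
  rw [List.getElem_append_left (by omega)]
  congr 1
  omega

theorem slice_prefix {W : ℕ → B} {w u : List B} (hw : PrefixOf w W) {i : ℕ}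
    (h : OccursAt u W i) (hl : i + u.length ≤ w.length) : u <+: w.drop i := by
  have heq : u = (w.drop i).take u.length := by
    apply List.ext_getElem
    · simp only [length_take, length_drop]; omega
    · intro j hj hj'
      have h2 := h j hj
      have hlen : i + j < w.length := by omega
      have h3 := hw (i + j) hlen
      rw [zero_add] at h3
      rw [List.getElem_take, List.getElem_drop]
      simp only [get_eq_getElem] at h2 h3
      rw [← h3, h2]
  rw [heq]
  exact take_prefix _ _

theorem infinite_of_unbounded {S : Set ℕ} (h : ∀ N : ℕ, ∃ i ∈ S, N ≤ i) : S.Infinite := by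
  by_contra hinf
  rw [Set.not_infinite] at hinf
  have hfin := hinf
  obtain ⟨b, hb⟩ := hfin.bddAbove
  obtain ⟨i, hiS, hi⟩ := h (b + 1)
  exact absurd (hb hiS) (by omega)

end Occ

end FPMW
namespace FPMW
open List

section Main

variable {A B : Type*} [Fintype A] [DecidableEq A]

theorem f1_iff (a₁ : A) (v : List A) (φ : A → List A) (ψ : A → List B)
    (u : List B) (W : ℕ → B) (hφ : φ a₁ = a₁ :: v) (hmor : IsMorphicWord φ ψ a₁ W) :
    FactorOf u W ↔ u <:+: applyMorph ψ ((applyMorph φ)^[capA A u.length] [a₁]) := by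
  set K := capA A u.length with hK
  constructor
  · rintro ⟨i, hi⟩
    obtain ⟨k, hk⟩ := hmor.1 (i + u.length)
    have hu : u <:+: applyMorph ψ ((applyMorph φ)^[k] [a₁]) :=
      (slice_prefix (hmor.2 k) hi hk).isInfix.trans (drop_suffix _ _).isInfix
    have := machine_psi_mono φ ψ (fun k (_ : Unit) => (applyMorph φ)^[k] [a₁])
      (fun k _ => P_succ φ a₁ k)
      (fun k S x hx => by
        obtain ⟨j, hj⟩ := hx
        exact ⟨j, hj.trans ((P_prefix φ a₁ v hφ k).filter S).isInfix⟩)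
      u (le_of_eq hK.symm) k ⟨(), hu⟩
    obtain ⟨_, h⟩ := this
    exact h
  · intro h
    obtain ⟨p, s, hps⟩ := h
    exact ⟨p.length, occ_of_prefix_decomp (hmor.2 K)
      (by rw [← hps, append_assoc])⟩

theorem f2_iff (a₁ : A) (v : List A) (φ : A → List A) (ψ : A → List B)
    (u : List B) (W : ℕ → B) (hφ : φ a₁ = a₁ :: v) (hmor : IsMorphicWord φ ψ a₁ W) :
    {i : ℕ | OccursAt u W i}.Infinite ↔
      u <:+: applyMorph ψ ((applyMorph φ)^[capA A u.length]
        (((applyMorph φ)^[capA (Option A) u.length] [a₁]).tail)) := by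
  set K := capA A u.length with hKdef
  set J := capA (Option A) u.length with hJdef
  have hJpos : 1 ≤ J := by
    have h1 : 0 < capA (Option A) u.length :=
      Nat.mul_pos (Nat.pow_pos (by omega)) (Nat.pow_pos (by omega))
    omega
  set cond : ℕ → Prop :=
    fun k => ∃ j : ℕ, u <:+: applyMorph ψ ((applyMorph φ)^[k]
      (((applyMorph φ)^[j + 1] [a₁]).tail)) with hcond
  -- decomposition of prefixes
  have hdecomp : ∀ k j : ℕ, applyMorph ψ ((applyMorph φ)^[k + (j + 1)] [a₁]) =
      applyMorph ψ ((applyMorph φ)^[k] [a₁]) ++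
        applyMorph ψ ((applyMorph φ)^[k] (((applyMorph φ)^[j + 1] [a₁]).tail)) := by
    intro k j
    rw [P_decomp φ a₁ v hφ k j, am_append]
  -- (a) Infinite → ∀ k, cond k
  have ha : {i : ℕ | OccursAt u W i}.Infinite → ∀ k, cond k := by
    intro hinf k
    obtain ⟨i, hiS, hilt⟩ := hinf.exists_gt ((applyMorph ψ ((applyMorph φ)^[k] [a₁])).length)
    obtain ⟨k', hk'⟩ := hmor.1 (i + u.length)
    have hle : (applyMorph ψ ((applyMorph φ)^[k'] [a₁])).length ≤
        (applyMorph ψ ((applyMorph φ)^[k + (k' + 1)] [a₁])).length :=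
      ((am_prefix_mono ψ (P_prefix_le φ a₁ v hφ (by omega))).length_le)
    have hiu : i + u.length ≤ (applyMorph ψ ((applyMorph φ)^[k + (k' + 1)] [a₁])).length :=
      hk'.trans hle
    have hupre : u <+: (applyMorph ψ ((applyMorph φ)^[k + (k' + 1)] [a₁])).drop i :=
      slice_prefix (hmor.2 _) hiS hiu
    rw [hdecomp k k'] at hupre
    set X := applyMorph ψ ((applyMorph φ)^[k] [a₁]) with hX
    set Y := applyMorph ψ ((applyMorph φ)^[k] (((applyMorph φ)^[k' + 1] [a₁]).tail)) with hY
    have hdd : (X ++ Y).drop i = Y.drop (i - X.length) := by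
      have h1 : Y.drop (i - X.length) = ((X ++ Y).drop X.length).drop (i - X.length) := by
        rw [drop_left]
      rw [h1, drop_drop]
      congr 1
      omega
    refine ⟨k', ?_⟩
    rw [hdd] at hupre
    exact hupre.isInfix.trans (drop_suffix _ _).isInfix
  -- (b) (∀ k, cond k) → Infinite
  have hb : (∀ k, cond k) → {i : ℕ | OccursAt u W i}.Infinite := by
    intro hc
    apply infinite_of_unbounded
    intro N
    obtain ⟨k, hk⟩ := hmor.1 N
    obtain ⟨j, hu⟩ := hc k
    obtain ⟨p, s, hps⟩ := hu
    refine ⟨(applyMorph ψ ((applyMorph φ)^[k] [a₁]) ++ p).length, ?_, ?_⟩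
    · exact occ_of_prefix_decomp (s := s) (hmor.2 (k + (j + 1)))
        (by rw [hdecomp k j, ← hps]; simp [append_assoc])
    · simp only [length_append]
      omega
  -- (c) cond K → ∀ k, cond k
  have hc : cond K → ∀ k, cond k := by
    intro hK k
    have := machine_psi_anti φ ψ
      (fun k j => (applyMorph φ)^[k] (((applyMorph φ)^[j + 1] [a₁]).tail))
      (fun k j => Function.iterate_succ_apply' _ _ _)
      (fun k S x hx => by
        obtain ⟨j, hj⟩ := hx
        refine ⟨j + 1, ?_⟩
        have h1 : (applyMorph φ)^[k + 1] (((applyMorph φ)^[j + 1] [a₁]).tail) =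
            (applyMorph φ)^[k] (applyMorph φ (((applyMorph φ)^[j + 1] [a₁]).tail)) :=
          Function.iterate_succ_apply _ _ _
        have h2 : applyMorph φ (((applyMorph φ)^[j + 1] [a₁]).tail) <:+
            ((applyMorph φ)^[j + 1 + 1] [a₁]).tail := by
          rw [tail_step φ a₁ v hφ (j + 1)]
          exact ⟨v, rfl⟩
        have h3 := am_iter_suffix_mono φ k h2
        rw [← h1] at h3
        exact hj.trans (h3.filter S).isInfix)
      u (le_of_eq hKdef.symm) k hK
    exact this
  -- (d) cond K ↔ RHS, via the star system over `Option A`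
  have hd : cond K ↔
      u <:+: applyMorph ψ ((applyMorph φ)^[K] (((applyMorph φ)^[J] [a₁]).tail)) := by
    set φh : Option A → List (Option A) := fun o =>
      match o with
      | none => none :: v.map some
      | some a => (φ a).map some
      with hφh
    set ψh : Option A → List B := fun o =>
      match o with
      | none => []
      | some a => applyMorph ψ ((applyMorph φ)^[K] [a])
      with hψh
    have star_shape : ∀ j : ℕ, (applyMorph φh)^[j] [none] =
        none :: (((applyMorph φ)^[j] [a₁]).tail).map some := by
      intro j
      induction j with
      | zero => simp
      | succ j ih =>
        rw [Function.iterate_succ_apply', ih]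
        have hcons : (none :: (((applyMorph φ)^[j] [a₁]).tail).map some)
            = [(none : Option A)] ++ (((applyMorph φ)^[j] [a₁]).tail).map some := rfl
        rw [hcons, am_append, am_singleton]
        have hmap : applyMorph φh ((((applyMorph φ)^[j] [a₁]).tail).map some) =
            ((applyMorph φ (((applyMorph φ)^[j] [a₁]).tail)).map some) := by
          rw [am_map]
          rw [show (fun a => φh (some a)) = (fun a : A => (φ a).map some) from rfl]
          rw [am_map_some]
        rw [hmap]
        rw [show φh none = none :: v.map some from rfl]
        rw [tail_step φ a₁ v hφ j, map_append]
        rfl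
    have star_psi : ∀ j : ℕ, applyMorph ψh ((applyMorph φh)^[j] [none]) =
        applyMorph ψ ((applyMorph φ)^[K] (((applyMorph φ)^[j] [a₁]).tail)) := by
      intro j
      rw [star_shape j]
      have hcons : (none :: (((applyMorph φ)^[j] [a₁]).tail).map some)
          = [(none : Option A)] ++ (((applyMorph φ)^[j] [a₁]).tail).map some := rfl
      rw [hcons, am_append, am_singleton]
      rw [show ψh none = ([] : List B) from rfl]
      rw [am_map]
      rw [show (fun a => ψh (some a)) =
        (fun a : A => applyMorph ψ ((applyMorph φ)^[K] [a])) from rfl]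
      rw [nil_append]
      rw [← am_comp ψ (fun a : A => (applyMorph φ)^[K] [a]), ← am_iterate_eq]
    constructor
    · intro hcK
      obtain ⟨j, hu⟩ := hcK
      have hu' : u <:+: applyMorph ψh ((applyMorph φh)^[j + 1] [none]) := by
        rw [star_psi (j + 1)]
        exact hu
      have := machine_psi_mono (A := Option A) φh ψh
        (fun j (_ : Unit) => (applyMorph φh)^[j] [none])
        (fun j _ => Function.iterate_succ_apply' _ _ _)
        (fun j S x hx => by
          obtain ⟨j', hj'⟩ := hx
          refine ⟨j', ?_⟩
          have hpre : (applyMorph φh)^[j] [none] <+: (applyMorph φh)^[j + 1] [none] := by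
            rw [star_shape j, star_shape (j + 1)]
            exact cons_prefix_cons.mpr ⟨rfl, (tail_prefix φ a₁ v hφ j).map some⟩
          exact hj'.trans ((hpre.filter S).isInfix))
        u (le_of_eq hJdef.symm) (j + 1) ⟨(), hu'⟩
      obtain ⟨_, h⟩ := this
      rw [star_psi J] at h
      exact h
    · intro h
      exact ⟨J - 1, by rw [show J - 1 + 1 = J from by omega]; exact h⟩
  constructor
  · intro h
    exact hd.mp (ha h K)
  · intro h
    exact hb (hc (hd.mpr h))

end Main

end FPMW
namespace FPMW
open List

/-- Boolean infix test. -/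
def isInfB {B : Type*} [DecidableEq B] (u w : List B) : Bool :=
  (List.range (w.length + 1)).any fun i =>
    (List.range u.length).all fun j => decide (u[j]? = w[i + j]?)

theorem isInfB_iff {B : Type*} [DecidableEq B] (u w : List B) :
    isInfB u w = true ↔ u <:+: w := by
  rw [isInfB, List.any_eq_true]
  constructor
  · rintro ⟨i, hi, hall⟩
    rw [List.all_eq_true] at hall
    rw [List.mem_range] at hi
    have hagree : ∀ j, j < u.length → u[j]? = w[i + j]? := by
      intro j hj
      exact of_decide_eq_true (hall j (List.mem_range.mpr hj))
    have hle : i + u.length ≤ w.length := by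
      by_contra hgt
      push_neg at hgt
      rcases Nat.eq_zero_or_pos u.length with h0 | hpos
      · omega
      · have hj := hagree (u.length - 1) (by omega)
        rw [getElem?_eq_getElem (by omega), getElem?_eq_none (by omega)] at hj
        exact Option.some_ne_none _ hj
    have heq : u = (w.drop i).take u.length := by
      apply List.ext_getElem
      · simp only [length_take, length_drop]; omega
      · intro j hj hj'
        rw [List.getElem_take, List.getElem_drop]
        have h2 := hagree j hj
        rw [getElem?_eq_getElem hj, getElem?_eq_getElem (by omega)] at h2
        exact Option.some.inj h2
    rw [heq]
    exact (take_prefix _ _).isInfix.trans (drop_suffix _ _).isInfix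
  · rintro ⟨p, s, hps⟩
    subst hps
    have hlen : p.length + u.length + s.length = (p ++ u ++ s).length := by
      simp; omega
    refine ⟨p.length, List.mem_range.mpr (by omega), ?_⟩
    rw [List.all_eq_true]
    intro j hj
    rw [List.mem_range] at hj
    apply decide_eq_true
    have h1 : (p ++ u ++ s)[p.length + j]'(by omega) = u[j] := by
      rw [List.getElem_append_left (by simp only [length_append]; omega)]
      rw [List.getElem_append_right (by omega : p.length ≤ p.length + j)]
      congr 1
      omega
    rw [getElem?_eq_getElem hj, getElem?_eq_getElem (by omega), h1]

section Prim
open Primrec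

theorem primrec_list_any {α β : Type*} [Primcodable α] [Primcodable β]
    {f : α → List β} {p : α → β → Bool} (hf : Primrec f) (hp : Primrec₂ p) :
    Primrec fun a => (f a).any (p a) := by
  have h : Primrec₂ fun (a : α) (q : β × Bool) => (p a q.1 || q.2) :=
    ((dom_bool₂ (· || ·)).comp (hp.comp fst (fst.comp snd))
      (snd.comp snd)).to₂
  have := list_foldr hf (const false) h
  apply this.of_eq
  intro a
  induction f a with
  | nil => rfl
  | cons b l ih => simp [ih]

theorem primrec_list_all {α β : Type*} [Primcodable α] [Primcodable β]
    {f : α → List β} {p : α → β → Bool} (hf : Primrec f) (hp : Primrec₂ p) :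
    Primrec fun a => (f a).all (p a) := by
  have h : Primrec₂ fun (a : α) (q : β × Bool) => (p a q.1 && q.2) :=
    ((dom_bool₂ (· && ·)).comp (hp.comp fst (fst.comp snd))
      (snd.comp snd)).to₂
  have := list_foldr hf (const true) h
  apply this.of_eq
  intro a
  induction f a with
  | nil => rfl
  | cons b l ih => simp [ih]

theorem primrec_isInfB {B : Type*} [Primcodable B] [DecidableEq B] :
    Primrec₂ (@isInfB B _) := by
  show Primrec fun q : List B × List B => isInfB q.1 q.2
  have h0 : Primrec₂ fun (q : List B × List B) (i : ℕ) =>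
      (List.range q.1.length).all fun j => decide (q.1[j]? = q.2[i + j]?) := by
    show Primrec fun q : (List B × List B) × ℕ =>
      (List.range q.1.1.length).all fun j => decide (q.1.1[j]? = q.1.2[q.2 + j]?)
    apply primrec_list_all
      (f := fun q : (List B × List B) × ℕ => List.range q.1.1.length)
      (p := fun q j => decide (q.1.1[j]? = q.1.2[q.2 + j]?))
    · exact list_range.comp (list_length.comp (fst.comp fst))
    · refine PrimrecRel.decide (R := fun (q : (List B × List B) × ℕ) (j : ℕ) => (q.1.1[j]? = q.1.2[q.2 + j]?)) ?_
      exact Primrec.eq.comp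
        (list_getElem?.comp (fst.comp (fst.comp fst)) snd)
        (list_getElem?.comp (snd.comp (fst.comp fst))
          (nat_add.comp (snd.comp fst) snd))
  have h1 : Primrec fun q : List B × List B =>
      (List.range (q.2.length + 1)).any fun i =>
        (List.range q.1.length).all fun j => decide (q.1[j]? = q.2[i + j]?) :=
    primrec_list_any (list_range.comp (succ.comp (list_length.comp snd))) h0
  exact h1.of_eq fun q => rfl

theorem primrec_pow_const (b : ℕ) : Primrec fun e : ℕ => b ^ e := by
  have h : Primrec₂ fun (_ : ℕ) (ih : ℕ) => ih * b :=
    (nat_mul.comp snd (const b)).to₂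
  have := nat_rec₁ 1 h
  apply this.of_eq
  intro e
  induction e with
  | zero => simp
  | succ e ih => simpa [pow_succ] using congrArg (· * b) ih

theorem primrec_am {k : ℕ} {γ : Type*} [Primcodable γ] :
    Primrec₂ fun (φ : Fin k → List γ) (w : List (Fin k)) => applyMorph φ w := by
  show Primrec fun q : (Fin k → List γ) × List (Fin k) => applyMorph q.1 q.2
  have hmap : Primrec fun q : (Fin k → List γ) × List (Fin k) => q.2.map q.1 :=
    list_map snd (fin_app.comp (fst.comp fst) snd)
  exact (list_flatten.comp hmap).of_eq fun q => rfl

theorem primrec_am_iter {k : ℕ} {X : Type*} [Primcodable X]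
    {φof : X → Fin k → List (Fin k)} {cnt : X → ℕ} {base : X → List (Fin k)}
    (h1 : Primrec φof) (h2 : Primrec cnt) (h3 : Primrec base) :
    Primrec fun x => (applyMorph (φof x))^[cnt x] (base x) := by
  have hh : Primrec₂ fun (x : X) (q : ℕ × List (Fin k)) => applyMorph (φof x) q.2 :=
    (primrec_am.comp (h1.comp fst) (snd.comp snd)).to₂
  have := nat_rec' h2 h3 hh
  apply this.of_eq
  intro x
  induction cnt x with
  | zero => rfl
  | succ c ih => rw [Function.iterate_succ_apply']; simpa using congrArg _ ih

end Prim

end FPMW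

open FPMW in
/-- decidability of the factor problem and of the "infinitely many
occurrences" problem for morphic words. -/
theorem factor_problems_of_morphic_words_decidable (m n : ℕ) (a₁ : Fin m) :
    ∃ f₁ f₂ : (Fin m → List (Fin m)) × (Fin m → List (Fin n)) × List (Fin n) → Bool,
      Computable f₁ ∧ Computable f₂ ∧
      ∀ (φ : Fin m → List (Fin m)) (ψ : Fin m → List (Fin n)) (u : List (Fin n))
        (W : ℕ → Fin n),
        Prolongable φ a₁ → IsMorphicWord φ ψ a₁ W →
        ((f₁ (φ, ψ, u) = true ↔ FactorOf u W) ∧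
         (f₂ (φ, ψ, u) = true ↔ {i : ℕ | OccursAt u W i}.Infinite)) := by
  refine ⟨fun p => isInfB p.2.2
      (applyMorph p.2.1 ((applyMorph p.1)^[capA (Fin m) p.2.2.length] [a₁])),
    fun p => isInfB p.2.2
      (applyMorph p.2.1 ((applyMorph p.1)^[capA (Fin m) p.2.2.length]
        (((applyMorph p.1)^[capA (Option (Fin m)) p.2.2.length] [a₁]).tail))),
    ?_, ?_, ?_⟩
  · apply Primrec.to_comp
    have hlen : Primrec fun p : (Fin m → List (Fin m)) × (Fin m → List (Fin n)) ×
        List (Fin n) => p.2.2.length :=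
      Primrec.list_length.comp (Primrec.snd.comp Primrec.snd)
    have hcnt1 : Primrec fun p : (Fin m → List (Fin m)) × (Fin m → List (Fin n)) ×
        List (Fin n) => capA (Fin m) p.2.2.length := by
      have h := Primrec.nat_mul.comp (Primrec.const (2 ^ m))
        ((primrec_pow_const (m + 1)).comp (Primrec.succ.comp hlen))
      apply h.of_eq
      intro p
      simp [capA]
    have hiter : Primrec fun p : (Fin m → List (Fin m)) × (Fin m → List (Fin n)) ×
        List (Fin n) => (applyMorph p.1)^[capA (Fin m) p.2.2.length] [a₁] :=
      primrec_am_iter Primrec.fst hcnt1 (Primrec.const [a₁])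
    have hw : Primrec fun p : (Fin m → List (Fin m)) × (Fin m → List (Fin n)) ×
        List (Fin n) =>
        applyMorph p.2.1 ((applyMorph p.1)^[capA (Fin m) p.2.2.length] [a₁]) :=
      primrec_am.comp (Primrec.fst.comp Primrec.snd) hiter
    exact primrec_isInfB.comp (Primrec.snd.comp Primrec.snd) hw
  · apply Primrec.to_comp
    have hlen : Primrec fun p : (Fin m → List (Fin m)) × (Fin m → List (Fin n)) ×
        List (Fin n) => p.2.2.length :=
      Primrec.list_length.comp (Primrec.snd.comp Primrec.snd)
    have hcnt1 : Primrec fun p : (Fin m → List (Fin m)) × (Fin m → List (Fin n)) ×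
        List (Fin n) => capA (Fin m) p.2.2.length := by
      have h := Primrec.nat_mul.comp (Primrec.const (2 ^ m))
        ((primrec_pow_const (m + 1)).comp (Primrec.succ.comp hlen))
      apply h.of_eq
      intro p
      simp [capA]
    have hcntJ : Primrec fun p : (Fin m → List (Fin m)) × (Fin m → List (Fin n)) ×
        List (Fin n) => capA (Option (Fin m)) p.2.2.length := by
      have h := Primrec.nat_mul.comp (Primrec.const (2 ^ (m + 1)))
        ((primrec_pow_const (m + 2)).comp (Primrec.succ.comp hlen))
      apply h.of_eq
      intro p
      simp [capA]
    have hiterJ : Primrec fun p : (Fin m → List (Fin m)) × (Fin m → List (Fin n)) ×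
        List (Fin n) => (applyMorph p.1)^[capA (Option (Fin m)) p.2.2.length] [a₁] :=
      primrec_am_iter Primrec.fst hcntJ (Primrec.const [a₁])
    have htail : Primrec fun p : (Fin m → List (Fin m)) × (Fin m → List (Fin n)) ×
        List (Fin n) =>
        (((applyMorph p.1)^[capA (Option (Fin m)) p.2.2.length] [a₁]).tail) := by
      have h := Primrec.list_casesOn hiterJ (Primrec.const ([] : List (Fin m)))
        ((Primrec.snd.comp Primrec.snd).to₂)
      apply h.of_eq
      intro p
      cases ((applyMorph p.1)^[capA (Option (Fin m)) p.2.2.length] [a₁]) <;> rfl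
    have hiter2 : Primrec fun p : (Fin m → List (Fin m)) × (Fin m → List (Fin n)) ×
        List (Fin n) => (applyMorph p.1)^[capA (Fin m) p.2.2.length]
          (((applyMorph p.1)^[capA (Option (Fin m)) p.2.2.length] [a₁]).tail) :=
      primrec_am_iter Primrec.fst hcnt1 htail
    have hw : Primrec fun p : (Fin m → List (Fin m)) × (Fin m → List (Fin n)) ×
        List (Fin n) =>
        applyMorph p.2.1 ((applyMorph p.1)^[capA (Fin m) p.2.2.length]
          (((applyMorph p.1)^[capA (Option (Fin m)) p.2.2.length] [a₁]).tail)) :=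
      primrec_am.comp (Primrec.fst.comp Primrec.snd) hiter2
    exact primrec_isInfB.comp (Primrec.snd.comp Primrec.snd) hw
  · intro φ ψ u W hpro hmor
    obtain ⟨v, hφv, -⟩ := hpro
    constructor
    · rw [isInfB_iff]
      exact (f1_iff a₁ v φ ψ u W hφv hmor).symm
    · rw [isInfB_iff]
      exact (f2_iff a₁ v φ ψ u W hφv hmor).symm
end

section
/- Let W : ℕ → A be a uniformly recurrent infinite word and U a nonempty finite word such that for every k : ℕ the k-fold concatenation U^k is a factor of W. Then every factor of W of length U.length is a cyclic shift of U, and W is purely periodic with the period equal to its prefix of length U.length (in particular ∀ i, W (i + U.length) = W i). -/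
/-- if a uniformly recurrent word contains all powers of a nonempty
word `U`, then all its factors of length `|U|` are cyclic shifts of `U` and the
word is purely periodic with period its prefix of length `|U|`. -/
theorem purely_periodic_of_unifRec_powers {A : Type*} (W : ℕ → A) (U : List A)
    (hU : U ≠ []) (hur : UniformlyRecurrent W)
    (hpow : ∀ k : ℕ, FactorOf (List.replicate k U).flatten W) :
    (∀ v : List A, FactorOf v W → v.length = U.length → IsCyclicShift v U) ∧
    PurelyPeriodicWith W (List.ofFn fun i : Fin U.length => W i) ∧
    (∀ i : ℕ, W (i + U.length) = W i) := by
  have hL0 : 0 < U.length := List.length_pos_iff.mpr hU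
  have hlenflat : ∀ k : ℕ, ((List.replicate k U).flatten).length = k * U.length := by
    intro k
    induction k with
    | zero => simp
    | succ k ih => rw [List.replicate_succ, List.flatten_cons, List.length_append, ih]; ring
  have hflat : ∀ k j (hj : j < ((List.replicate k U).flatten).length),
      ((List.replicate k U).flatten)[j] = U[j % U.length]'(Nat.mod_lt j hL0) := by
    intro k
    induction k with
    | zero => intro j hj; simp at hj
    | succ k ih =>
      intro j hj
      have heq : (List.replicate (k+1) U).flatten = U ++ (List.replicate k U).flatten := by
        simp [List.replicate_succ]
      have hj2 : j < (U ++ (List.replicate k U).flatten).length := heq ▸ hj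
      rw [List.getElem_of_eq heq hj]
      rcases lt_or_ge j U.length with h | h
      · rw [List.getElem_append_left h]
        congr 1
        exact (Nat.mod_eq_of_lt h).symm
      · rw [List.getElem_append_right h]
        have hj' : j - U.length < ((List.replicate k U).flatten).length := by
          rw [List.replicate_succ, List.flatten_cons, List.length_append] at hj
          omega
        rw [ih _ hj']
        congr 1
        conv_rhs => rw [← Nat.sub_add_cancel h]
        rw [Nat.add_mod_right]
  -- every factor of W occurs in the periodic word U^∞
  have key : ∀ v : List A, FactorOf v W →
      ∃ p : ℕ, ∀ j (hj : j < v.length), v[j] = U[(p + j) % U.length]'(Nat.mod_lt _ hL0) := by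
    intro v hv
    obtain ⟨N, hN⟩ := hur v hv
    set k := N + 1 with hk
    have hNk : N ≤ ((List.replicate k U).flatten).length := by
      rw [hlenflat]; nlinarith
    obtain ⟨i, hi⟩ := hpow k
    set w := (List.replicate k U).flatten with hw
    have hocc : OccursAt (w.take N) W i := by
      intro j hj
      have hj' : j < w.length := by
        have h := hj; simp at h; omega
      have := hi j hj'
      simpa [List.getElem_take] using this
    have hlen : (w.take N).length = N := by simp [hNk]
    obtain ⟨s, t, hst⟩ := hN (w.take N) ⟨i, hocc⟩ hlen
    refine ⟨s.length, fun j hj => ?_⟩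
    have hll := congrArg List.length hst
    rw [hlen] at hll
    simp only [List.length_append] at hll
    have hjw : s.length + j < w.length := by omega
    have h1 : v[j] = w[s.length + j] := by
      have h2 : (w.take N)[s.length + j]'(by rw [hlen]; omega) = v[j] := by
        rw [List.getElem_of_eq hst.symm, List.getElem_append_left (by simp; omega),
          List.getElem_append_right (by omega)]
        congr 1
        omega
      exact h2.symm.trans List.getElem_take
    rw [h1, hflat k _ hjw]
  -- step: W (i + |U|) = W i
  have step : ∀ i : ℕ, W (i + U.length) = W i := by
    intro i
    set v : List A := List.ofFn (fun j : Fin (U.length + 1) => W (i + j)) with hv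
    have hvfac : FactorOf v W := by
      refine ⟨i, fun j hj => ?_⟩
      simp only [hv, List.get_eq_getElem, List.getElem_ofFn]
    obtain ⟨p, hp⟩ := key v hvfac
    have hvl : v.length = U.length + 1 := by simp [hv]
    have hvget : ∀ j (hj : j < v.length), v[j] = W (i + j) := by
      intro j hj
      simp only [hv, List.getElem_ofFn]
    have e1 : W (i + U.length) = U[(p + U.length) % U.length]'(Nat.mod_lt _ hL0) := by
      rw [← hvget U.length (by omega)]; exact hp _ _
    have e2 : W i = U[(p + 0) % U.length]'(Nat.mod_lt _ hL0) := by
      have h0 := hp 0 (by omega)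
      rw [hvget 0 (by omega)] at h0
      simpa using h0
    rw [e1, e2]
    congr 1
    rw [Nat.add_zero, Nat.add_mod_right]
  refine ⟨?_, ?_, step⟩
  · intro v hv hvl
    obtain ⟨p, hp⟩ := key v hv
    have hrot : v = U.rotate (p % U.length) := by
      apply List.ext_getElem (by simp [hvl])
      intro j h1 h2
      have := hp j h1
      rw [this]
      have h3 : (U.rotate (p % U.length))[j] =
          U[(j + p % U.length) % U.length]'(Nat.mod_lt _ hL0) := by
        have := List.get_rotate U (p % U.length) ⟨j, h2⟩
        simpa using this
      rw [h3]
      congr 1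
      rw [Nat.add_comm p j, Nat.add_mod j p, Nat.add_mod j (p % U.length),
        Nat.mod_mod_of_dvd p (dvd_refl U.length)]
    refine ⟨U.take (p % U.length), U.drop (p % U.length), (List.take_append_drop _ _).symm, ?_⟩
    rw [hrot, List.rotate_eq_drop_append_take (le_of_lt (Nat.mod_lt _ hL0))]
  · set u : List A := List.ofFn (fun i : Fin U.length => W i) with hu2
    have hul : u.length = U.length := by simp [hu2]
    have hune : u ≠ [] := by
      intro h; rw [h] at hul; simp at hul; omega
    refine ⟨hune, fun i => ?_⟩
    have hmod : ∀ i : ℕ, W i = W (i % U.length) := by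
      intro i
      induction i using Nat.strong_induction_on with
      | _ i ih =>
        rcases lt_or_ge i U.length with h | h
        · rw [Nat.mod_eq_of_lt h]
        · have h1 : i = (i - U.length) + U.length := by omega
          rw [h1, step, ih (i - U.length) (by omega), Nat.add_mod_right]
    rw [hmod i]
    simp only [List.get_eq_getElem, hu2, List.getElem_ofFn]
    congr 1
    simp [hul]
end

section
/- Let φ be a primitive nonerasing substitution on a finite alphabet A, prolongable over a letter a, and let ψ : A → List B be a nonerasing morphism such that the infinite word H obtained by applying ψ to φ^∞(a) is not eventually periodic. Then there exist P ≥ 1 and K with 0 < K < 1 such that: (i) for all factors u₁, u₂ of H, if u₂.length ≥ P · u₁.length then u₁ is a factor of u₂; and (ii) for every factor u of H, any two distinct starting positions i ≠ j of occurrences of u in H satisfy |i − j| ≥ K · u.length. -/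
namespace LRAux
open List

variable {A B : Type*}

theorem applyMorph_nil (φ : A → List B) : applyMorph φ [] = [] := rfl

theorem applyMorph_singleton (φ : A → List B) (b : A) : applyMorph φ [b] = φ b := by
  simp [applyMorph]

theorem applyMorph_append (φ : A → List B) (x y : List A) :
    applyMorph φ (x ++ y) = applyMorph φ x ++ applyMorph φ y := by
  simp [applyMorph]

theorem iter_append (φ : A → List A) (n : ℕ) (x y : List A) :
    (applyMorph φ)^[n] (x ++ y) = (applyMorph φ)^[n] x ++ (applyMorph φ)^[n] y := by
  induction n generalizing x y with
  | zero => rfl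
  | succ n ih => rw [Function.iterate_succ_apply, Function.iterate_succ_apply,
      Function.iterate_succ_apply, applyMorph_append, ih]

theorem iter_nil (φ : A → List A) (n : ℕ) : (applyMorph φ)^[n] [] = [] := by
  induction n with
  | zero => rfl
  | succ n ih => rw [Function.iterate_succ_apply, applyMorph_nil, ih]

theorem applyMorph_prefix (φ : A → List B) {x y : List A} (h : x <+: y) :
    applyMorph φ x <+: applyMorph φ y := by
  obtain ⟨t, rfl⟩ := h
  exact ⟨applyMorph φ t, (applyMorph_append φ x t).symm⟩

theorem iter_prefix (φ : A → List A) (n : ℕ) {x y : List A} (h : x <+: y) :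
    (applyMorph φ)^[n] x <+: (applyMorph φ)^[n] y := by
  obtain ⟨t, rfl⟩ := h
  exact ⟨(applyMorph φ)^[n] t, (iter_append φ n x t).symm⟩

theorem applyMorph_infix (φ : A → List B) {x y : List A} (h : x <:+: y) :
    applyMorph φ x <:+: applyMorph φ y := by
  obtain ⟨s, t, rfl⟩ := h
  exact ⟨applyMorph φ s, applyMorph φ t, by rw [← applyMorph_append, ← applyMorph_append]⟩

theorem iter_infix (φ : A → List A) (n : ℕ) {x y : List A} (h : x <:+: y) :
    (applyMorph φ)^[n] x <:+: (applyMorph φ)^[n] y := by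
  obtain ⟨s, t, rfl⟩ := h
  exact ⟨(applyMorph φ)^[n] s, (applyMorph φ)^[n] t, by rw [← iter_append, ← iter_append]⟩

theorem singleton_infix {b : A} {w : List A} (h : b ∈ w) : [b] <:+: w := by
  obtain ⟨s, t, rfl⟩ := List.append_of_mem h
  exact ⟨s, t, by simp⟩

theorem len_applyMorph_le (φ : A → List B) {M : ℕ} (hM : ∀ b, (φ b).length ≤ M)
    (w : List A) : (applyMorph φ w).length ≤ M * w.length := by
  induction w with
  | nil => simp [applyMorph]
  | cons b w ih =>
    have : applyMorph φ (b :: w) = φ b ++ applyMorph φ w := by simp [applyMorph]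
    rw [this, List.length_append, List.length_cons, Nat.mul_succ]
    have := hM b
    omega

theorem len_le_applyMorph (φ : A → List B) (hne : Nonerasing φ) (w : List A) :
    w.length ≤ (applyMorph φ w).length := by
  induction w with
  | nil => simp [applyMorph]
  | cons b w ih =>
    have h1 : applyMorph φ (b :: w) = φ b ++ applyMorph φ w := by simp [applyMorph]
    have h2 : 1 ≤ (φ b).length := List.length_pos_iff.mpr (hne b)
    rw [h1, List.length_append, List.length_cons]
    omega

theorem len_iter_le (φ : A → List A) {M : ℕ} (hM : ∀ b, (φ b).length ≤ M) (n : ℕ)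
    (w : List A) : ((applyMorph φ)^[n] w).length ≤ M ^ n * w.length := by
  induction n generalizing w with
  | zero => simp
  | succ n ih =>
    rw [Function.iterate_succ_apply]
    calc ((applyMorph φ)^[n] (applyMorph φ w)).length ≤ M ^ n * (applyMorph φ w).length := ih _
      _ ≤ M ^ n * (M * w.length) := Nat.mul_le_mul_left _ (len_applyMorph_le φ hM w)
      _ = M ^ (n+1) * w.length := by ring

theorem len_le_iter (φ : A → List A) (hne : Nonerasing φ) (n : ℕ) (w : List A) :
    w.length ≤ ((applyMorph φ)^[n] w).length := by
  induction n generalizing w with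
  | zero => simp
  | succ n ih =>
    rw [Function.iterate_succ_apply]
    exact (len_le_applyMorph φ hne w).trans (ih _)

theorem iter_ne_nil (φ : A → List A) (hne : Nonerasing φ) (n : ℕ) {w : List A}
    (hw : w ≠ []) : (applyMorph φ)^[n] w ≠ [] := by
  have := len_le_iter φ hne n w
  have hl : 1 ≤ w.length := List.length_pos_iff.mpr hw
  intro h
  rw [h, List.length_nil] at this
  omega

theorem occursAt_prefix_mono {W : ℕ → B} {w w' : List B} (h : w' <+: w)
    (hw : OccursAt w W 0) : OccursAt w' W 0 := by
  intro j hj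
  have hj2 : j < w.length := hj.trans_le h.length_le
  have := hw j hj2
  rw [this]
  exact (h.getElem hj).symm

theorem infix_of_occurs {W : ℕ → B} {u w : List B} {q : ℕ} (hu : OccursAt u W q)
    (hw : OccursAt w W 0) (hle : q + u.length ≤ w.length) : u <:+: w := by
  have : u = (w.drop q).take u.length := by
    apply List.ext_getElem
    · rw [List.length_take, List.length_drop]; omega
    · intro i hi1 hi2
      rw [List.getElem_take, List.getElem_drop]
      have h1 := hu i hi1
      have h2 := hw (q + i) (by omega)
      rw [Nat.zero_add] at h2
      simp only [List.get_eq_getElem] at h1 h2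
      rw [← h1, ← h2]
  rw [this]
  exact ((w.drop q).take_prefix u.length).isInfix.trans (w.drop_suffix q).isInfix

theorem window_occurs (W : ℕ → B) (p m : ℕ) :
    OccursAt (List.ofFn fun r : Fin m => W (p + r)) W p := by
  intro r hr
  simp only [List.length_ofFn] at hr
  simp only [List.get_eq_getElem, List.getElem_ofFn]

theorem getElem_append_mid (x w y : List B) (r : ℕ) (hr : r < w.length) :
    (x ++ w ++ y)[x.length + r]'(by simp only [List.length_append]; omega) = w[r] := by
  rw [List.getElem_append_left (by rw [List.length_append]; omega),
    List.getElem_append_right (by omega)]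
  congr 1
  omega

end LRAux

namespace LRAux2
open List
variable {B : Type*}

theorem block_in_pref {m : ℕ} (hm : 1 ≤ m) (L : List (List B)) (y u : List B)
    (heq : u ++ y = L.flatten) (hlen : ∀ c ∈ L, c.length ≤ m) (hu : m ≤ u.length) :
    ∃ c ∈ L, c <+: u := by
  cases L with
  | nil =>
    simp only [List.flatten_nil] at heq
    have h1 := (List.append_eq_nil_iff.mp heq).1
    rw [h1] at hu
    simp at hu
    omega
  | cons c L' =>
    refine ⟨c, List.mem_cons_self, ?_⟩
    have h1 : c <+: u ++ y := by
      rw [heq, List.flatten_cons]; exact List.prefix_append c L'.flatten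
    exact List.prefix_of_prefix_length_le h1 (List.prefix_append u y)
      ((hlen c (List.mem_cons_self)).trans hu)

theorem block_in {m : ℕ} : ∀ (L : List (List B)) (x y u : List B),
    x ++ u ++ y = L.flatten → (∀ c ∈ L, 1 ≤ c.length ∧ c.length ≤ m) →
    2 * m ≤ u.length → u ≠ [] → ∃ c ∈ L, c <:+: u := by
  intro L
  induction L with
  | nil =>
    intro x y u heq _ _ hne
    simp only [List.flatten_nil] at heq
    exact absurd (List.append_eq_nil_iff.mp ((List.append_eq_nil_iff.mp heq).1)).2 hne
  | cons c L' ih =>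
    intro x y u heq hlen hu hne
    rw [List.flatten_cons] at heq
    have hc1 : 1 ≤ c.length := (hlen c (List.mem_cons_self)).1
    have hcm : c.length ≤ m := (hlen c (List.mem_cons_self)).2
    by_cases hx : c.length ≤ x.length
    · have hcx : c <+: x := by
        have h1 : c <+: x ++ u ++ y := ⟨L'.flatten, heq.symm⟩
        have h2 : x <+: x ++ u ++ y := by
          rw [List.append_assoc]; exact List.prefix_append x (u ++ y)
        exact List.prefix_of_prefix_length_le h1 h2 hx
      obtain ⟨x', rfl⟩ := hcx
      have heq' : x' ++ u ++ y = L'.flatten := by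
        apply List.append_cancel_left (as := c)
        simp only [List.append_assoc] at heq ⊢
        exact heq
      obtain ⟨c', hc', hic⟩ := ih x' y u heq' (fun d hd => hlen d (List.mem_cons_of_mem c hd)) hu hne
      exact ⟨c', List.mem_cons_of_mem c hc', hic⟩
    · push_neg at hx
      obtain ⟨d, hd⟩ : ∃ d, c.length = x.length + d := ⟨c.length - x.length, by omega⟩
      have hdu : d ≤ u.length := by omega
      have hcxu : c <+: x ++ u := by
        have h1 : c <+: x ++ u ++ y := ⟨L'.flatten, heq.symm⟩
        have h2 : x ++ u <+: x ++ u ++ y := List.prefix_append (x ++ u) y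
        exact List.prefix_of_prefix_length_le h1 h2 (by rw [List.length_append]; omega)
      have hc_eq : c = x ++ u.take d := by
        have h1 := List.prefix_iff_eq_take.mp hcxu
        rw [h1, hd, List.take_append]; simp
      have hL : x ++ u ++ y = (x ++ u.take d) ++ (u.drop d ++ y) := by
        conv_lhs => rw [← List.take_append_drop d u]
        simp only [List.append_assoc]
      have heq' : u.drop d ++ y = L'.flatten := by
        apply List.append_cancel_left (as := x ++ u.take d)
        rw [← hL, heq, hc_eq]
      have hlen' : m ≤ (u.drop d).length := by
        rw [List.length_drop]; omega
      obtain ⟨c', hc', hpc⟩ := block_in_pref (by omega) L' y (u.drop d) heq'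
        (fun e he => (hlen e (List.mem_cons_of_mem c he)).2) hlen'
      exact ⟨c', List.mem_cons_of_mem c hc', hpc.isInfix.trans (u.drop_suffix d).isInfix⟩

theorem two_block {m : ℕ} : ∀ (L : List (List B)) (x y u : List B),
    x ++ u ++ y = L.flatten → (∀ c ∈ L, m ≤ c.length) → u.length ≤ m → u ≠ [] →
    ∃ i, i < L.length ∧ u <:+: (L.getD i [] ++ L.getD (i+1) []) := by
  intro L
  induction L with
  | nil =>
    intro x y u heq _ _ hne
    simp only [List.flatten_nil] at heq
    exact absurd (List.append_eq_nil_iff.mp ((List.append_eq_nil_iff.mp heq).1)).2 hne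
  | cons c L' ih =>
    intro x y u heq hlen hu hne
    rw [List.flatten_cons] at heq
    by_cases hx : c.length ≤ x.length
    · have hcx : c <+: x := by
        have h1 : c <+: x ++ u ++ y := ⟨L'.flatten, heq.symm⟩
        have h2 : x <+: x ++ u ++ y := by
          rw [List.append_assoc]; exact List.prefix_append x (u ++ y)
        exact List.prefix_of_prefix_length_le h1 h2 hx
      obtain ⟨x', rfl⟩ := hcx
      have heq' : x' ++ u ++ y = L'.flatten := by
        apply List.append_cancel_left (as := c)
        simp only [List.append_assoc] at heq ⊢
        exact heq
      obtain ⟨i, hi, hinf⟩ := ih x' y u heq' (fun d hd => hlen d (List.mem_cons_of_mem c hd)) hu hne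
      refine ⟨i + 1, by simpa using Nat.succ_lt_succ hi, ?_⟩
      simpa only [List.getD_cons_succ] using hinf
    · push_neg at hx
      refine ⟨0, Nat.succ_pos _, ?_⟩
      cases L' with
      | nil =>
        simp only [List.flatten_nil, List.append_nil] at heq
        show u <:+: c ++ (List.getD [] 0 [])
        simp only [List.getD_cons_zero, List.getD_nil, List.append_nil]
        exact ⟨x, y, heq⟩
      | cons e L'' =>
        show u <:+: c ++ e
        have hme : m ≤ e.length := hlen e (List.mem_cons_of_mem c (List.mem_cons_self))
        have h1 : x ++ u <+: x ++ u ++ y := List.prefix_append (x ++ u) y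
        rw [heq] at h1
        have h2 : x ++ u <+: (c ++ e) ++ L''.flatten := by
          rw [List.append_assoc]
          rw [List.flatten_cons] at h1
          exact h1
        have hxu : x ++ u <+: c ++ e :=
          List.prefix_of_prefix_length_le h2 (List.prefix_append (c ++ e) L''.flatten)
            (by rw [List.length_append, List.length_append]; omega)
        exact ((List.suffix_append x u).isInfix).trans hxu.isInfix
end LRAux2

namespace LRAux3
open List LRAux
variable {A B : Type*}

theorem map_flatten (g : List A → List B) (hnil : g [] = [])
    (happ : ∀ x y, g (x ++ y) = g x ++ g y) (L : List (List A)) :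
    g L.flatten = (L.map g).flatten := by
  induction L with
  | nil => simpa
  | cons c L ih => rw [List.flatten_cons, happ, ih, List.map_cons, List.flatten_cons]

theorem ofFn_prefix (f : ℕ → A) {m m' : ℕ} (h : m ≤ m') :
    List.ofFn (fun j : Fin m => f j) <+: List.ofFn (fun j : Fin m' => f j) := by
  rw [List.prefix_iff_eq_take]
  apply List.ext_getElem
  · simp; omega
  · intro i h1 h2
    simp [List.getElem_take]

theorem ofFn_eq_flatten (f : ℕ → A) (m : ℕ) :
    List.ofFn (fun j : Fin m => f j) = ((List.range m).map (fun i => [f i])).flatten := by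
  induction m with
  | zero => rfl
  | succ m ih =>
    rw [List.ofFn_succ', List.range_succ, List.map_append, List.flatten_append,
      List.concat_eq_append]
    have : (List.ofFn fun i : Fin m => f ↑i.castSucc) = List.ofFn fun j : Fin m => f j := by
      apply List.ext_getElem <;> simp
    rw [this, ih]
    simp

section FP
variable (φ : A → List A) (a : A) (v : List A)

theorem fp_succ (hv : φ a = a :: v) (n : ℕ) :
    (applyMorph φ)^[n+1] [a] = (applyMorph φ)^[n] [a] ++ (applyMorph φ)^[n] v := by
  rw [Function.iterate_succ_apply, applyMorph_singleton, hv,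
    show a :: v = [a] ++ v from rfl, iter_append]

theorem fp_len (hv : φ a = a :: v) (hvne : ∀ k : ℕ, (applyMorph φ)^[k] v ≠ []) (n : ℕ) :
    n + 1 ≤ ((applyMorph φ)^[n] [a]).length := by
  induction n with
  | zero => simp
  | succ n ih =>
    rw [fp_succ φ a v hv n, List.length_append]
    have := List.length_pos_iff.mpr (hvne n)
    omega

theorem fp_mono (hv : φ a = a :: v) {n m : ℕ} (h : n ≤ m) :
    (applyMorph φ)^[n] [a] <+: (applyMorph φ)^[m] [a] := by
  induction m with
  | zero => rw [Nat.le_zero.mp h]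
  | succ m ih =>
    rcases Nat.lt_or_ge n (m+1) with h' | h'
    · exact (ih (by omega)).trans ⟨_, (fp_succ φ a v hv m).symm⟩
    · rw [Nat.le_antisymm h h']

noncomputable def fpX : ℕ → A := fun i => ((applyMorph φ)^[i+1] [a]).getD i a

theorem fp_getElem (hv : φ a = a :: v) (hvne : ∀ k : ℕ, (applyMorph φ)^[k] v ≠ [])
    (n i : ℕ) (hi : i < ((applyMorph φ)^[n] [a]).length) :
    ((applyMorph φ)^[n] [a])[i] = fpX φ a i := by
  have hi' : i < ((applyMorph φ)^[i+1] [a]).length := by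
    have := fp_len φ a v hv hvne (i+1); omega
  rw [fpX, List.getD_eq_getElem _ _ hi']
  rcases Nat.le_total n (i+1) with h | h
  · exact (fp_mono φ a v hv h).getElem hi
  · exact ((fp_mono φ a v hv h).getElem hi').symm

theorem fp_eq_ofFn (hv : φ a = a :: v) (hvne : ∀ k : ℕ, (applyMorph φ)^[k] v ≠ []) (n : ℕ) :
    (applyMorph φ)^[n] [a]
      = List.ofFn (fun j : Fin ((applyMorph φ)^[n] [a]).length => fpX φ a j) := by
  apply List.ext_getElem
  · simp
  · intro i h1 h2
    rw [List.getElem_ofFn, fp_getElem φ a v hv hvne n i h1]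

theorem fpX_pref_prefix (hv : φ a = a :: v) (hvne : ∀ k : ℕ, (applyMorph φ)^[k] v ≠ [])
    (m : ℕ) : List.ofFn (fun j : Fin m => fpX φ a j) <+: (applyMorph φ)^[m] [a] := by
  rw [fp_eq_ofFn φ a v hv hvne m]
  exact ofFn_prefix _ (by have := fp_len φ a v hv hvne m; omega)

theorem fpX_pair_infix (hv : φ a = a :: v) (hvne : ∀ k : ℕ, (applyMorph φ)^[k] v ≠ [])
    (i : ℕ) : [fpX φ a i, fpX φ a (i+1)] <:+: (applyMorph φ)^[i+2] [a] := by
  have h : [fpX φ a i, fpX φ a (i+1)] <:+: List.ofFn (fun j : Fin (i+2) => fpX φ a j) := by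
    refine ⟨List.ofFn (fun j : Fin i => fpX φ a j), [], ?_⟩
    apply List.ext_getElem
    · simp
    · intro j h1 h2
      simp only [List.append_nil]
      rcases Nat.lt_trichotomy j i with h | h | h
      · rw [List.getElem_append_left (by simpa using h), List.getElem_ofFn, List.getElem_ofFn]
      · subst h
        rw [List.getElem_append_right (by simp), List.getElem_ofFn]
        simp
      · have hj : j = i + 1 := by simp at h2; omega
        subst hj
        rw [List.getElem_append_right (by simp), List.getElem_ofFn]
        simp [show i + 1 - i = 1 from by omega]
  exact h.trans (fpX_pref_prefix φ a v hv hvne (i+2)).isInfix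

end FP
end LRAux3

open LRAux LRAux2 LRAux3 in
/-- a non eventually periodic primitive morphic word is linearly
recurrent in the sense of the two constants `P`, `K` of the paper. -/
theorem primitive_word_linear_recurrence_constants {A B : Type*} [Fintype A]
    (φ : A → List A) (a : A) (ψ : A → List B)
    (hneφ : Nonerasing φ) (hneψ : Nonerasing ψ)
    (hprim : PrimitiveSubst φ) (hpro : Prolongable φ a)
    (H : ℕ → B) (hH : IsMorphicWord φ ψ a H)
    (hnp : ¬ EventuallyPeriodic H) :
    ∃ P K : ℝ, 1 ≤ P ∧ 0 < K ∧ K < 1 ∧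
      (∀ u₁ u₂ : List B, FactorOf u₁ H → FactorOf u₂ H →
        P * (u₁.length : ℝ) ≤ (u₂.length : ℝ) → u₁ <:+: u₂) ∧
      (∀ u : List B, ∀ i j : ℕ, OccursAt u H i → OccursAt u H j → i ≠ j →
        K * (u.length : ℝ) ≤ |(i : ℝ) - (j : ℝ)|) := by
  classical
  obtain ⟨v, hv, hvne⟩ := hpro
  obtain ⟨k, hk1, hk⟩ := hprim
  set X : ℕ → A := fpX φ a with hXdef
  obtain ⟨M, hM1, hM⟩ : ∃ M : ℕ, 1 ≤ M ∧ ∀ b : A, (φ b).length ≤ M :=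
    ⟨max 1 (Finset.univ.sup fun b => (φ b).length), le_max_left _ _,
      fun b => le_max_of_le_right (Finset.le_sup (f := fun b => (φ b).length) (Finset.mem_univ b))⟩
  obtain ⟨Mψ, hMψ1, hMψ⟩ : ∃ Mψ : ℕ, 1 ≤ Mψ ∧ ∀ b : A, (ψ b).length ≤ Mψ :=
    ⟨max 1 (Finset.univ.sup fun b => (ψ b).length), le_max_left _ _,
      fun b => le_max_of_le_right (Finset.le_sup (f := fun b => (ψ b).length) (Finset.mem_univ b))⟩
  have hMpos : 0 < M := hM1
  have hpairN : ∀ i : ℕ, ∃ N, [X i, X (i+1)] <:+: (applyMorph φ)^[N] [a] :=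
    fun i => ⟨i+2, fpX_pair_infix φ a v hv hvne i⟩
  obtain ⟨N0, hN0⟩ : ∃ N0, ∀ i : ℕ, [X i, X (i+1)] <:+: (applyMorph φ)^[N0] [a] := by
    set g : A × A → ℕ := fun pr =>
      if h : ∃ N, [pr.1, pr.2] <:+: (applyMorph φ)^[N] [a] then h.choose else 0 with hg
    refine ⟨Finset.univ.sup g, fun i => ?_⟩
    have hex : ∃ N, [X i, X (i+1)] <:+: (applyMorph φ)^[N] [a] := hpairN i
    have h1 : [X i, X (i+1)] <:+: (applyMorph φ)^[g (X i, X (i+1))] [a] := by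
      have : g (X i, X (i+1)) = hex.choose := by
        rw [hg]; exact dif_pos hex
      rw [this]; exact hex.choose_spec
    exact h1.trans (fp_mono φ a v hv
      (Finset.le_sup (f := g) (Finset.mem_univ (X i, X (i+1))))).isInfix
  set k0 := N0 + k with hk0def
  have hk0 : ∀ (i : ℕ) (b : A), [X i, X (i+1)] <:+: (applyMorph φ)^[k0] [b] := by
    intro i b
    have h1 : [a] <:+: (applyMorph φ)^[k] [b] := singleton_infix (hk b a)
    have h2 : (applyMorph φ)^[N0] [a] <:+: (applyMorph φ)^[N0 + k] [b] := by
      rw [Function.iterate_add_apply]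
      exact iter_infix φ N0 h1
    exact (hN0 i).trans h2
  set C0 : ℕ := Mψ * (M ^ k0 * (M ^ k * M)) with hC0def
  have hC0pos : 0 < C0 :=
    Nat.mul_pos hMψ1 (Nat.mul_pos (pow_pos hMpos k0) (Nat.mul_pos (pow_pos hMpos k) hMpos))
  have hHpref : ∀ (j m : ℕ),
      OccursAt (applyMorph ψ ((applyMorph φ)^[j] (List.ofFn fun t : Fin m => X t))) H 0 := by
    intro j m
    have h1 : (List.ofFn fun t : Fin m => X t) <+: (applyMorph φ)^[m] [a] :=
      fpX_pref_prefix φ a v hv hvne m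
    have h2 : (applyMorph φ)^[j] (List.ofFn fun t : Fin m => X t)
        <+: (applyMorph φ)^[j + m] [a] := by
      rw [Function.iterate_add_apply]
      exact iter_prefix φ j h1
    exact occursAt_prefix_mono (applyMorph_prefix ψ h2) (hH.2 (j + m))
  have hflat : ∀ (j m : ℕ), applyMorph ψ ((applyMorph φ)^[j] (List.ofFn fun t : Fin m => X t))
      = ((List.range m).map (fun i => applyMorph ψ ((applyMorph φ)^[j] [X i]))).flatten := by
    intro j m
    rw [ofFn_eq_flatten, map_flatten (fun w => applyMorph ψ ((applyMorph φ)^[j] w))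
      (by show applyMorph ψ ((applyMorph φ)^[j] ([] : List A)) = []
          rw [iter_nil]; rfl)
      (fun x y => by
          show applyMorph ψ ((applyMorph φ)^[j] (x ++ y)) = _
          rw [iter_append, applyMorph_append]),
      List.map_map]
    rfl
  have hlenpref : ∀ (j m : ℕ),
      m ≤ (applyMorph ψ ((applyMorph φ)^[j] (List.ofFn fun t : Fin m => X t))).length := by
    intro j m
    have h1 := len_le_iter φ hneφ j (List.ofFn fun t : Fin m => X t)
    have h2 := len_le_applyMorph ψ hneψ ((applyMorph φ)^[j] (List.ofFn fun t : Fin m => X t))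
    simp only [List.length_ofFn] at h1
    omega
  have hgetD : ∀ (j m i : ℕ),
      ((List.range m).map (fun i => applyMorph ψ ((applyMorph φ)^[j] [X i]))).getD i []
      = if i < m then applyMorph ψ ((applyMorph φ)^[j] [X i]) else [] := by
    intro j m i
    split
    · next h =>
      rw [List.getD_eq_getElem _ _ (by simpa using h)]
      simp
    · next h =>
      rw [List.getD_eq_default _ _ (by simpa using h)]
  -- MAIN COMBINATORIAL STEP
  have key : ∀ u₁ u₂ : List B, FactorOf u₁ H → FactorOf u₂ H →
      2 * C0 * u₁.length ≤ u₂.length → u₁ <:+: u₂ := by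
    intro u₁ u₂ hf1 hf2 hle
    rcases eq_or_ne u₁ [] with rfl | hne1
    · exact List.nil_infix
    have hl1 : 1 ≤ u₁.length := List.length_pos_iff.mpr hne1
    set ℓ := u₁.length with hℓdef
    have hQex : ∃ j : ℕ, ∀ b : A, ℓ ≤ (applyMorph ψ ((applyMorph φ)^[j] [b])).length := by
      refine ⟨ℓ + k, fun b => ?_⟩
      have h1 : (applyMorph φ)^[ℓ] [a] <:+: (applyMorph φ)^[ℓ + k] [b] := by
        rw [Function.iterate_add_apply]
        exact iter_infix φ ℓ (singleton_infix (hk b a))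
      have h2 := fp_len φ a v hv hvne ℓ
      have h3 := h1.length_le
      have h4 := len_le_applyMorph ψ hneψ ((applyMorph φ)^[ℓ + k] [b])
      omega
    set n := Nat.find hQex with hndef
    have hQn : ∀ b : A, ℓ ≤ (applyMorph ψ ((applyMorph φ)^[n] [b])).length := Nat.find_spec hQex
    have hsmall : ∃ c : A, ((applyMorph φ)^[n] [c]).length ≤ M * ℓ := by
      rcases Nat.eq_zero_or_pos n with h0 | hpos
      · refine ⟨a, ?_⟩
        rw [h0]
        simpa using Nat.mul_le_mul hM1 hl1
      · have hmin := Nat.find_min hQex (show n - 1 < n by omega)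
        push_neg at hmin
        obtain ⟨c, hc⟩ := hmin
        refine ⟨c, ?_⟩
        have h1 : ((applyMorph φ)^[n-1] [c]).length ≤ ℓ := by
          have := len_le_applyMorph ψ hneψ ((applyMorph φ)^[n-1] [c])
          omega
        have h2 : (applyMorph φ)^[n] [c] = applyMorph φ ((applyMorph φ)^[n-1] [c]) := by
          conv_lhs => rw [show n = (n-1) + 1 by omega]
          rw [Function.iterate_succ_apply']
        rw [h2]
        calc (applyMorph φ ((applyMorph φ)^[n-1] [c])).length
            ≤ M * ((applyMorph φ)^[n-1] [c]).length := len_applyMorph_le φ hM _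
          _ ≤ M * ℓ := Nat.mul_le_mul_left _ h1
    obtain ⟨c0, hc0⟩ := hsmall
    have hcomp : ∀ b : A, ((applyMorph φ)^[n] [b]).length
        ≤ M ^ k * ((applyMorph φ)^[n] [c0]).length := by
      intro b
      rcases le_or_gt k n with hkn | hkn
      · have h1 : (applyMorph φ)^[n] [b] = (applyMorph φ)^[k] ((applyMorph φ)^[n - k] [b]) := by
          rw [← Function.iterate_add_apply, show k + (n - k) = n by omega]
        have h2 : ((applyMorph φ)^[k] ((applyMorph φ)^[n-k] [b])).length
            ≤ M ^ k * ((applyMorph φ)^[n-k] [b]).length := len_iter_le φ hM k _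
        have h3 : (applyMorph φ)^[n-k] [b] <:+: (applyMorph φ)^[n] [c0] := by
          have h := iter_infix φ (n-k) (singleton_infix (hk c0 b))
          rwa [← Function.iterate_add_apply, show (n-k) + k = n by omega] at h
        have h4 := h3.length_le
        rw [h1]
        calc ((applyMorph φ)^[k] ((applyMorph φ)^[n-k] [b])).length
            ≤ M ^ k * ((applyMorph φ)^[n-k] [b]).length := h2
          _ ≤ M ^ k * ((applyMorph φ)^[n] [c0]).length := Nat.mul_le_mul_left _ h4
      · have h1 : ((applyMorph φ)^[n] [b]).length ≤ M ^ n := by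
          have := len_iter_le φ hM n [b]
          simpa using this
        have h2 : M ^ n ≤ M ^ k := Nat.pow_le_pow_right hMpos (by omega)
        have h3 : 1 ≤ ((applyMorph φ)^[n] [c0]).length := by
          have := len_le_iter φ hneφ n [c0]
          simpa using this
        calc ((applyMorph φ)^[n] [b]).length ≤ M ^ k := h1.trans h2
          _ = M ^ k * 1 := (Nat.mul_one _).symm
          _ ≤ M ^ k * ((applyMorph φ)^[n] [c0]).length := Nat.mul_le_mul_left _ h3
    have hblk : ∀ b : A, (applyMorph ψ ((applyMorph φ)^[k0 + n] [b])).length ≤ C0 * ℓ := by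
      intro b
      have h1 : (applyMorph ψ ((applyMorph φ)^[k0+n] [b])).length
          ≤ Mψ * ((applyMorph φ)^[k0+n] [b]).length := len_applyMorph_le ψ hMψ _
      have h2 : ((applyMorph φ)^[k0+n] [b]).length
          ≤ M ^ k0 * ((applyMorph φ)^[n] [b]).length := by
        rw [Function.iterate_add_apply]
        exact len_iter_le φ hM k0 _
      have h3 := hcomp b
      calc (applyMorph ψ ((applyMorph φ)^[k0+n] [b])).length
          ≤ Mψ * (M ^ k0 * (M ^ k * (M * ℓ))) :=
            h1.trans (Nat.mul_le_mul_left _ (h2.trans (Nat.mul_le_mul_left _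
              (h3.trans (Nat.mul_le_mul_left _ hc0)))))
        _ = C0 * ℓ := by rw [hC0def]; ring
    -- locate u₁ inside two consecutive level-n blocks
    obtain ⟨q₁, hq₁⟩ := hf1
    have hu1pref : u₁ <:+: applyMorph ψ ((applyMorph φ)^[n]
        (List.ofFn fun t : Fin (q₁ + ℓ) => X t)) :=
      infix_of_occurs hq₁ (hHpref n (q₁ + ℓ)) (hlenpref n (q₁ + ℓ))
    rw [hflat n (q₁ + ℓ)] at hu1pref
    obtain ⟨x, y, hxy⟩ := hu1pref
    obtain ⟨i, hi, hiu⟩ := two_block (m := ℓ) _ x y u₁ hxy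
      (by
        intro c hc
        rw [List.mem_map] at hc
        obtain ⟨i', _, rfl⟩ := hc
        exact hQn (X i'))
      (le_refl ℓ) hne1
    rw [List.length_map, List.length_range] at hi
    rw [hgetD, hgetD, if_pos hi] at hiu
    have hu1two : u₁ <:+: applyMorph ψ ((applyMorph φ)^[n] [X i])
        ++ applyMorph ψ ((applyMorph φ)^[n] [X (i+1)]) := by
      by_cases h2 : i + 1 < q₁ + ℓ
      · rwa [if_pos h2] at hiu
      · rw [if_neg h2, List.append_nil] at hiu
        exact hiu.trans (List.prefix_append _ _).isInfix
    have hu1pair : u₁ <:+: applyMorph ψ ((applyMorph φ)^[n] ([X i] ++ [X (i+1)])) := by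
      rwa [iter_append, applyMorph_append]
    have hu1all : ∀ b : A, u₁ <:+: applyMorph ψ ((applyMorph φ)^[k0 + n] [b]) := by
      intro b
      have h2 : (applyMorph φ)^[n] ([X i] ++ [X (i+1)]) <:+: (applyMorph φ)^[k0 + n] [b] := by
        have h3 := iter_infix φ n (hk0 i b)
        rw [← Function.iterate_add_apply, Nat.add_comm n k0] at h3
        exact h3
      exact hu1pair.trans (applyMorph_infix ψ h2)
    -- locate a full level-(k0+n) block inside u₂
    obtain ⟨q₂, hq₂⟩ := hf2
    have hne2 : u₂ ≠ [] := by
      intro h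
      rw [h] at hle
      simp only [List.length_nil, Nat.le_zero] at hle
      have : 0 < 2 * C0 * ℓ := by positivity
      omega
    have hu2pref : u₂ <:+: applyMorph ψ ((applyMorph φ)^[k0 + n]
        (List.ofFn fun t : Fin (q₂ + u₂.length) => X t)) :=
      infix_of_occurs hq₂ (hHpref (k0 + n) (q₂ + u₂.length)) (hlenpref (k0 + n) (q₂ + u₂.length))
    rw [hflat (k0 + n) (q₂ + u₂.length)] at hu2pref
    obtain ⟨x2, y2, hxy2⟩ := hu2pref
    obtain ⟨c, hcmem, hcinf⟩ := block_in (m := C0 * ℓ) _ x2 y2 u₂ hxy2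
      (by
        intro c hc
        rw [List.mem_map] at hc
        obtain ⟨i2, _, rfl⟩ := hc
        constructor
        · have h1 := len_le_iter φ hneφ (k0+n) [X i2]
          have h2 := len_le_applyMorph ψ hneψ ((applyMorph φ)^[k0+n] [X i2])
          simp only [List.length_singleton] at h1
          omega
        · exact hblk (X i2))
      (by rw [← Nat.mul_assoc]; exact hle) hne2
    rw [List.mem_map] at hcmem
    obtain ⟨i2, _, rfl⟩ := hcmem
    exact (hu1all (X i2)).trans hcinf
  -- FINAL ASSEMBLY
  refine ⟨((2 * C0 : ℕ) : ℝ), 1 / ((4 * C0 : ℕ) : ℝ), ?_, ?_, ?_, ?_, ?_⟩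
  · have : (1 : ℕ) ≤ 2 * C0 := by omega
    exact_mod_cast this
  · have : (0 : ℕ) < 4 * C0 := by omega
    positivity
  · rw [div_lt_one (by exact_mod_cast (show (0:ℕ) < 4 * C0 by omega))]
    exact_mod_cast (show (1:ℕ) < 4 * C0 by omega)
  · intro u₁ u₂ h1 h2 hPle
    apply key u₁ u₂ h1 h2
    have : ((2 * C0 * u₁.length : ℕ) : ℝ) ≤ ((u₂.length : ℕ) : ℝ) := by
      push_cast
      push_cast at hPle
      linarith
    exact_mod_cast this
  · intro u i j hoi hoj hij
    by_contra hcon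
    push_neg at hcon
    have main : ∀ i j : ℕ, i < j → OccursAt u H i → OccursAt u H j →
        ((j - i : ℕ) : ℝ) < 1 / ((4 * C0 : ℕ) : ℝ) * (u.length : ℝ) → False := by
      clear hcon hij hoi hoj
      intro i j hltij hoi hoj hlt
      set t := j - i with htdef
      have ht1 : 1 ≤ t := by omega
      have h4 : 4 * C0 * t < u.length := by
        have h40 : (0:ℝ) < ((4 * C0 : ℕ):ℝ) := by
          exact_mod_cast (show (0:ℕ) < 4 * C0 by omega)
        have h5 : ((4*C0 : ℕ):ℝ) * (t:ℝ) < (u.length:ℝ) := by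
          calc ((4*C0 : ℕ):ℝ) * (t:ℝ)
              < ((4*C0 : ℕ):ℝ) * (1 / ((4 * C0 : ℕ) : ℝ) * (u.length : ℝ)) :=
                mul_lt_mul_of_pos_left hlt h40
            _ = (u.length:ℝ) := by field_simp
        have h6 : ((4 * C0 * t : ℕ) : ℝ) < ((u.length : ℕ) : ℝ) := by push_cast; push_cast at h5; linarith
        exact_mod_cast h6
      have hper : ∀ (s : ℕ) (hs : s + t < u.length), u[s+t] = u[s]'(by omega) := by
        intro s hs
        have h1 := hoi (s+t) hs
        have h2 := hoj s (by omega)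
        have h3 : i + (s + t) = j + s := by omega
        rw [h3] at h1
        simp only [List.get_eq_getElem] at h1 h2
        rw [← h1, ← h2]
      have hperH : ∀ s : ℕ, s + t < u.length → H (i + s + t) = H (i + s) := by
        intro s hs
        have h1 := hoj s (by omega)
        have h2 := hoi s (by omega)
        have h3 : i + s + t = j + s := by omega
        rw [h3, h1, h2]
      have hHper : ∀ p : ℕ, H (p + t) = H p := by
        intro p
        have hwocc : OccursAt (List.ofFn fun r : Fin (t+1) => H (p + r)) H p :=
          window_occurs H p (t+1)
        have hwlen : (List.ofFn fun r : Fin (t+1) => H (p + r)).length = t + 1 :=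
          List.length_ofFn
        have hwinf : (List.ofFn fun r : Fin (t+1) => H (p + r)) <:+: u := by
          apply key _ u ⟨p, hwocc⟩ ⟨i, hoi⟩
          rw [hwlen]
          have : 2 * C0 * (t + 1) ≤ 4 * C0 * t := by nlinarith
          omega
        obtain ⟨x, y, hxy⟩ := hwinf
        have hxlen : x.length + (t+1) + y.length = u.length := by
          have h := congrArg List.length hxy
          simp only [List.length_append, hwlen] at h
          omega
        have hoi' : OccursAt (x ++ (List.ofFn fun r : Fin (t+1) => H (p + r)) ++ y) H i := by
          rw [hxy]; exact hoi
        have e : ∀ (r : ℕ), r < t + 1 → H (p + r) = H (i + x.length + r) := by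
          intro r hr
          have h1 : H (p + r) = (List.ofFn fun r : Fin (t+1) => H (p + r))[r]'(by
              rw [hwlen]; omega) := by
            have := hwocc r (by rw [hwlen]; omega)
            simpa using this
          have h2 : H (i + (x.length + r))
              = (x ++ (List.ofFn fun r : Fin (t+1) => H (p + r)) ++ y)[x.length + r]'(by
                  simp only [List.length_append, hwlen]; omega) := by
            have := hoi' (x.length + r) (by simp only [List.length_append, hwlen]; omega)
            simpa using this
          rw [getElem_append_mid _ _ _ r (by rw [hwlen]; omega)] at h2
          rw [h1, ← h2, Nat.add_assoc]
        have e1 := e t (by omega)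
        have e2 := e 0 (by omega)
        have e3 := hperH x.length (by omega)
        rw [Nat.add_zero] at e2
        rw [e1, e3]
        exact e2.symm
      exact hnp ⟨0, t, ht1, fun p _ => hHper p⟩
    rcases lt_trichotomy i j with h | h | h
    · apply main i j h hoi hoj
      have habs : |(i : ℝ) - (j : ℝ)| = ((j - i : ℕ) : ℝ) := by
        rw [abs_sub_comm, abs_of_nonneg (by
          have : (i:ℝ) ≤ (j:ℝ) := by exact_mod_cast h.le
          linarith)]
        rw [Nat.cast_sub h.le]
      rw [← habs]
      exact hcon
    · exact hij h
    · apply main j i h hoj hoi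
      have habs : |(i : ℝ) - (j : ℝ)| = ((i - j : ℕ) : ℝ) := by
        rw [abs_of_nonneg (by
          have : (j:ℝ) ≤ (i:ℝ) := by exact_mod_cast h.le
          linarith)]
        rw [Nat.cast_sub h.le]
      rw [← habs]
      exact hcon
end
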